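/- arXiv:2208.08862 — 11 statements merged into one kernel-verified Lean document; each statement's English description precedes it below -/
import Mathlib

section
/- Let f : ℝ → ℝ be bounded. Then the following are equivalent: (P1) for all real numbers a₁, b₁, a₂, b₂, τ, if a₁ + b₁·f(t) = a₂ + b₂·f(t+τ) for all t ∈ ℝ, then a₁ = a₂ and b₁ = b₂; (P2) there is no τ ∈ ℝ such that f(t) = sup f + inf f − f(t+τ) for all t ∈ ℝ. -/
/-- For a bounded function `f : ℝ → ℝ`, the injectivity property (P1) of the
map `(a, b) ↦ [a + b·f]` into time-translation equivalence classes is equivalent to (P2):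
there is no `τ` such that `f(t) = sup f + inf f − f(t+τ)` for all `t`. -/
theorem stmt0 (f : ℝ → ℝ) (hf : ∃ M : ℝ, ∀ t : ℝ, |f t| ≤ M) :
    (∀ a₁ b₁ a₂ b₂ τ : ℝ,
        (∀ t : ℝ, a₁ + b₁ * f t = a₂ + b₂ * f (t + τ)) → a₁ = a₂ ∧ b₁ = b₂) ↔
      ¬ ∃ τ : ℝ, ∀ t : ℝ,
          f t = sSup (Set.range f) + sInf (Set.range f) - f (t + τ) := by
  obtain ⟨M, hM⟩ := hf
  set S := sSup (Set.range f) with hSdef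
  set I := sInf (Set.range f) with hIdef
  have hne : (Set.range f).Nonempty := ⟨f 0, 0, rfl⟩
  have hba : BddAbove (Set.range f) := ⟨M, by rintro x ⟨t, rfl⟩; exact (abs_le.1 (hM t)).2⟩
  have hbb : BddBelow (Set.range f) := ⟨-M, by rintro x ⟨t, rfl⟩; exact (abs_le.1 (hM t)).1⟩
  have hfS : ∀ t, f t ≤ S := fun t => le_csSup hba ⟨t, rfl⟩
  have hIf : ∀ t, I ≤ f t := fun t => csInf_le hbb ⟨t, rfl⟩
  constructor
  · rintro h1 ⟨τ, hτ⟩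
    have h := h1 0 1 (S + I) (-1) τ (fun t => by linarith [hτ t])
    linarith [h.2]
  · intro h2 a₁ b₁ a₂ b₂ τ h
    have hnc : ∀ c : ℝ, ¬ ∀ t, f t = c := by
      intro c hc
      apply h2
      have hr : Set.range f = {c} := by
        ext x
        simp only [Set.mem_singleton_iff]
        constructor
        · rintro ⟨t, rfl⟩; exact hc t
        · rintro rfl; exact ⟨0, hc 0⟩
      refine ⟨0, fun t => ?_⟩
      rw [hSdef, hIdef, hr, csSup_singleton, csInf_singleton, hc t, hc (t + 0)]
      ring
    have hSI : I < S := by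
      rcases lt_or_ge I S with h' | h'
      · exact h'
      · exact (hnc I (fun t => le_antisymm ((hfS t).trans h') (hIf t))).elim
    by_cases hb2 : b₂ = 0
    · subst hb2
      by_cases hb1 : b₁ = 0
      · subst hb1
        exact ⟨by linarith [h 0], rfl⟩
      · exfalso
        apply hnc ((a₂ - a₁) / b₁)
        intro t
        rw [eq_div_iff hb1]
        linear_combination h t
    by_cases hb1 : b₁ = 0
    · exfalso
      apply hnc ((a₁ - a₂) / b₂)
      intro s
      have hs : s - τ + τ = s := by ring
      have ht := h (s - τ)
      rw [hs] at ht
      subst hb1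
      rw [eq_div_iff hb2]
      linear_combination -ht
    set α := (a₁ - a₂) / b₂ with hαdef
    set β := b₁ / b₂ with hβdef
    have hβ0 : β ≠ 0 := div_ne_zero hb1 hb2
    have key : ∀ t, f (t + τ) = α + β * f t := by
      intro t
      rw [hαdef, hβdef]
      field_simp
      linear_combination -(h t)
    have key' : ∀ s, f s = α + β * f (s - τ) := by
      intro s
      have hs : s - τ + τ = s := by ring
      have := key (s - τ)
      rwa [hs] at this
    rcases lt_trichotomy β 0 with hβ | hβ | hβ
    · -- β < 0 : contradiction with h2
      exfalso
      have hS1 : S ≤ α + β * I := by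
        apply csSup_le hne
        rintro x ⟨s, rfl⟩
        have h1 := mul_le_mul_of_nonpos_left (hIf (s - τ)) hβ.le
        linarith [key' s]
      have hS2 : α + β * I ≤ S := by
        apply le_of_forall_pos_le_add
        intro ε hε
        have hεβ : (0:ℝ) < ε / (-β) := div_pos hε (by linarith)
        obtain ⟨x, ⟨t, rfl⟩, hx⟩ := exists_lt_of_csInf_lt hne
          (show I < I + ε / (-β) by linarith)
        have h3 := mul_lt_mul_of_neg_left hx hβ
        have h4 : β * (I + ε / (-β)) = β * I - ε := by
          have hβn : -β ≠ 0 := by simpa using hβ0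
          field_simp
          ring
        linarith [key t, hfS (t + τ)]
      have hSe : S = α + β * I := le_antisymm hS1 hS2
      have hI1 : α + β * S ≤ I := by
        apply le_csInf hne
        rintro x ⟨s, rfl⟩
        have h1 := mul_le_mul_of_nonpos_left (hfS (s - τ)) hβ.le
        linarith [key' s]
      have hI2 : I ≤ α + β * S := by
        apply le_of_forall_pos_le_add
        intro ε hε
        have hεβ : (0:ℝ) < ε / (-β) := div_pos hε (by linarith)
        obtain ⟨x, ⟨t, rfl⟩, hx⟩ := exists_lt_of_lt_csSup hne
          (show S - ε / (-β) < S by linarith)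
        have h3 := mul_lt_mul_of_neg_left hx hβ
        have h4 : β * (S - ε / (-β)) = β * S + ε := by
          have hβn : -β ≠ 0 := by simpa using hβ0
          field_simp
          ring
        linarith [key t, hIf (t + τ)]
      have hIe : I = α + β * S := le_antisymm hI2 hI1
      have hprod : (1 + β) * (S - I) = 0 := by linear_combination hSe - hIe
      have hβ1 : β = -1 := by
        rcases mul_eq_zero.1 hprod with h' | h'
        · linarith
        · linarith
      have hα1 : α = S + I := by rw [hβ1] at hSe; linarith
      apply h2
      refine ⟨τ, fun t => ?_⟩
      have := key t
      rw [hβ1, hα1] at this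
      linarith
    · exact (hβ0 hβ).elim
    · -- β > 0
      have hS1 : S ≤ α + β * S := by
        apply csSup_le hne
        rintro x ⟨s, rfl⟩
        have h1 := mul_le_mul_of_nonneg_left (hfS (s - τ)) hβ.le
        linarith [key' s]
      have hS2 : α + β * S ≤ S := by
        apply le_of_forall_pos_le_add
        intro ε hε
        have hεβ : (0:ℝ) < ε / β := div_pos hε hβ
        obtain ⟨x, ⟨t, rfl⟩, hx⟩ := exists_lt_of_lt_csSup hne
          (show S - ε / β < S by linarith)
        have h3 := mul_lt_mul_of_pos_left hx hβ
        have h4 : β * (S - ε / β) = β * S - ε := by field_simp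
        linarith [key t, hfS (t + τ)]
      have hSe : S = α + β * S := le_antisymm hS1 hS2
      have hI1 : α + β * I ≤ I := by
        apply le_csInf hne
        rintro x ⟨s, rfl⟩
        have h1 := mul_le_mul_of_nonneg_left (hIf (s - τ)) hβ.le
        linarith [key' s]
      have hI2 : I ≤ α + β * I := by
        apply le_of_forall_pos_le_add
        intro ε hε
        have hεβ : (0:ℝ) < ε / β := div_pos hε hβ
        obtain ⟨x, ⟨t, rfl⟩, hx⟩ := exists_lt_of_csInf_lt hne
          (show I < I + ε / β by linarith)
        have h3 := mul_lt_mul_of_pos_left hx hβ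
        have h4 : β * (I + ε / β) = β * I + ε := by field_simp
        linarith [key t, hIf (t + τ)]
      have hIe : I = α + β * I := le_antisymm hI2 hI1
      have hprod : (β - 1) * (S - I) = 0 := by linear_combination hIe - hSe
      have hβ1 : β = 1 := by
        rcases mul_eq_zero.1 hprod with h' | h'
        · linarith
        · linarith
      have hα1 : α = 0 := by rw [hβ1] at hSe; linarith
      constructor
      · have h5 : (a₁ - a₂) / b₂ = 0 := hαdef ▸ hα1
        rw [div_eq_zero_iff] at h5
        rcases h5 with h' | h'
        · linarith
        · exact (hb2 h').elim
      · have h5 : b₁ / b₂ = 1 := hβdef ▸ hβ1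
        field_simp at h5
        exact h5
end

section
/- Let f : ℝ → ℝ be bounded. Suppose there exist real numbers a₁, b₁, a₂, b₂, τ with (a₁,b₁) ≠ (a₂,b₂) such that a₁ + b₁·f(t) = a₂ + b₂·f(t+τ) for all t ∈ ℝ. Then there exists τ' ∈ ℝ such that f(t) = sup f + inf f − f(t+τ') for all t ∈ ℝ. -/
lemma const_case (f : ℝ → ℝ) (c : ℝ) (hc : ∀ t, f t = c) :
    ∃ τ' : ℝ, ∀ t : ℝ,
      f t = sSup (Set.range f) + sInf (Set.range f) - f (t + τ') := by
  have hr : Set.range f = {c} := by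
    ext x; simp [hc, eq_comm]
  refine ⟨0, fun t => ?_⟩
  rw [hr, csSup_singleton, csInf_singleton, hc, hc]; ring

/-- For a bounded `f : ℝ → ℝ`, if two distinct parameter pairs `(a₁,b₁)` and
`(a₂,b₂)` satisfy `a₁ + b₁·f(t) = a₂ + b₂·f(t+τ)` for all `t`, then there is a `τ'` with
`f(t) = sup f + inf f − f(t+τ')` for all `t`. -/
theorem stmt2 (f : ℝ → ℝ) (hf : ∃ M : ℝ, ∀ t : ℝ, |f t| ≤ M)
    (a₁ b₁ a₂ b₂ τ : ℝ) (hne : (a₁, b₁) ≠ (a₂, b₂))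
    (h : ∀ t : ℝ, a₁ + b₁ * f t = a₂ + b₂ * f (t + τ)) :
    ∃ τ' : ℝ, ∀ t : ℝ,
      f t = sSup (Set.range f) + sInf (Set.range f) - f (t + τ') := by
  obtain ⟨M, hM⟩ := hf
  have hnonempty : (Set.range f).Nonempty := ⟨f 0, 0, rfl⟩
  have hbdda : BddAbove (Set.range f) := by
    refine ⟨M, ?_⟩; rintro x ⟨t, rfl⟩; exact (abs_le.1 (hM t)).2
  have hbddb : BddBelow (Set.range f) := by
    refine ⟨-M, ?_⟩; rintro x ⟨t, rfl⟩; exact (abs_le.1 (hM t)).1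
  set S := sSup (Set.range f) with hS
  set I := sInf (Set.range f) with hI
  have hfS : ∀ t, f t ≤ S := fun t => le_csSup hbdda ⟨t, rfl⟩
  have hIf : ∀ t, I ≤ f t := fun t => csInf_le hbddb ⟨t, rfl⟩
  by_cases hb₂ : b₂ = 0
  · subst hb₂
    by_cases hb₁ : b₁ = 0
    · subst hb₁
      exfalso; apply hne
      have := h 0; simp at this; simp [this]
    · -- f constant
      apply const_case f ((a₂ - a₁) / b₁)
      intro t
      have := h t
      field_simp
      linarith
  · set α := (a₁ - a₂) / b₂ with hα
    set β := b₁ / b₂ with hβ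
    have h' : ∀ t, f (t + τ) = α + β * f t := by
      intro t
      have := h t
      rw [hα, hβ]
      field_simp
      linarith
    have hrange : (fun x => α + β * x) '' Set.range f = Set.range f := by
      have h1 : (fun x => α + β * x) '' Set.range f
          = Set.range (fun t => α + β * f t) := (Set.range_comp _ f).symm
      have h2 : (fun t : ℝ => α + β * f t) = (f ∘ fun t => t + τ) := by
        funext t; exact (h' t).symm
      have h3 : Function.Surjective (fun t : ℝ => t + τ) :=
        fun y => ⟨y - τ, by ring⟩
      rw [h1, h2, h3.range_comp]
    have hcont : ∀ x : ℝ, ContinuousAt (fun x => α + β * x) x := by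
      intro x; fun_prop
    rcases le_or_gt 0 β with hβ0 | hβ0
    · -- monotone case
      have hmono : Monotone (fun x => α + β * x) := fun x y hxy => by
        dsimp; nlinarith
      have e1 : α + β * S = S := by
        have := hmono.map_csSup_of_continuousAt (hcont S) hnonempty hbdda
        rw [hrange] at this; exact this
      have e2 : α + β * I = I := by
        have := hmono.map_csInf_of_continuousAt (hcont I) hnonempty hbddb
        rw [hrange] at this; exact this
      by_cases hβ1 : β = 1
      · exfalso
        -- b₁ = b₂, so a₁ ≠ a₂, but α = 0
        have hb : b₁ = b₂ := by
          rw [hβ] at hβ1; field_simp at hβ1; linarith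
        have ha : a₁ ≠ a₂ := by
          intro hae; exact hne (by rw [hae, hb])
        have hα0 : α = 0 := by rw [hβ1] at e1; linarith
        rw [hα] at hα0
        have : a₁ - a₂ = 0 := by
          field_simp at hα0; linarith
        exact ha (by linarith)
      · -- S = I, f constant
        have hSI : S = I := by
          rcases eq_or_ne β 0 with h0 | h0
          · rw [h0] at e1 e2; linarith
          · have : β * (S - I) = S - I := by linarith
            have : (β - 1) * (S - I) = 0 := by linarith
            rcases mul_eq_zero.1 this with h | h
            · exact absurd (by linarith : β = 1) hβ1
            · linarith
        apply const_case f S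
        intro t
        have := hIf t
        have := hfS t
        linarith
    · -- antitone case
      have hanti : Antitone (fun x => α + β * x) := fun x y hxy => by
        dsimp; nlinarith
      have e1 : α + β * S = I := by
        have := hanti.map_csSup_of_continuousAt (hcont S) hnonempty hbdda
        rw [hrange] at this; exact this
      have e2 : α + β * I = S := by
        have := hanti.map_csInf_of_continuousAt (hcont I) hnonempty hbddb
        rw [hrange] at this; exact this
      by_cases hβ1 : β = -1
      · -- main case: α = S + I, τ' = τ
        rw [hβ1] at e1 h'
        have hαSI : α = S + I := by linarith
        refine ⟨τ, fun t => ?_⟩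
        have := h' t
        rw [hαSI] at this
        linarith
      · have hSI : S = I := by
          have : (β + 1) * (S - I) = 0 := by linarith
          rcases mul_eq_zero.1 this with h | h
          · exact absurd (by linarith : β = -1) hβ1
          · linarith
        apply const_case f S
        intro t
        have := hIf t
        have := hfS t
        linarith
end

section
/- Let f : ℝ → ℝ be bounded and nonconstant, and suppose there exist a ∈ ℝ, b < 0 and τ ∈ ℝ such that f(t) = a + b·f(t+τ) for all t ∈ ℝ. Then b = −1 and a = sup f + inf f. -/
/-- If `f : ℝ → ℝ` is bounded and nonconstant and satisfies
`f(t) = a + b·f(t+τ)` for all `t` with `b < 0`, then `b = −1` and `a = sup f + inf f`. -/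
theorem stmt4 (f : ℝ → ℝ) (hf : ∃ M : ℝ, ∀ t : ℝ, |f t| ≤ M)
    (hnc : ∃ s t : ℝ, f s ≠ f t) (a b τ : ℝ) (hb : b < 0)
    (h : ∀ t : ℝ, f t = a + b * f (t + τ)) :
    b = -1 ∧ a = sSup (Set.range f) + sInf (Set.range f) := by
  obtain ⟨M, hM⟩ := hf
  have hba : BddAbove (Set.range f) := ⟨M, by rintro _ ⟨t, rfl⟩; exact (abs_le.1 (hM t)).2⟩
  have hbb : BddBelow (Set.range f) := ⟨-M, by rintro _ ⟨t, rfl⟩; exact (abs_le.1 (hM t)).1⟩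
  have hne : (Set.range f).Nonempty := ⟨f 0, 0, rfl⟩
  set g : ℝ → ℝ := fun x => a + b * x with hg
  have hga : Antitone g := fun x y hxy => by
    simp only [hg]
    nlinarith
  have hgc : ∀ x, ContinuousAt g x := fun x => by fun_prop
  have himg : g '' Set.range f = Set.range f := by
    ext y
    constructor
    · rintro ⟨_, ⟨t, rfl⟩, rfl⟩
      exact ⟨t - τ, by rw [h (t - τ)]; ring_nf; simp only [hg]⟩
    · rintro ⟨t, rfl⟩
      exact ⟨f (t + τ), ⟨t + τ, rfl⟩, (h t).symm⟩
  set S := sSup (Set.range f)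
  set I := sInf (Set.range f)
  have h1 : g I = S := by
    rw [Antitone.map_csInf_of_continuousAt (hgc I) hga hne hbb, himg]
  have h2 : g S = I := by
    rw [Antitone.map_csSup_of_continuousAt (hgc S) hga hne hba, himg]
  obtain ⟨s, t, hst⟩ := hnc
  have hSI : I < S := by
    rcases lt_or_ge (f s) (f t) with hlt | hle
    · exact lt_of_le_of_lt (csInf_le hbb ⟨s, rfl⟩) (lt_of_lt_of_le hlt (le_csSup hba ⟨t, rfl⟩))
    · have : f t < f s := lt_of_le_of_ne hle (Ne.symm hst)
      exact lt_of_le_of_lt (csInf_le hbb ⟨t, rfl⟩) (lt_of_lt_of_le this (le_csSup hba ⟨s, rfl⟩))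
  simp only [hg] at h1 h2
  have hb1 : b = -1 := by nlinarith
  constructor
  · exact hb1
  · rw [hb1] at h1; linarith
end

section
/- Let ω > 0. There is no τ ∈ ℝ such that |sin(ωt)| = 1 − |sin(ω(t+τ))| for all t ∈ ℝ. (Here 1 = sup f and 0 = inf f for f(t) = |sin(ωt)|, so f satisfies condition (P2).) -/
/-- For `ω > 0`, there is no `τ` such that
`|sin(ωt)| = 1 − |sin(ω(t+τ))|` for all `t`; i.e. the nudging signal `f(t) = |sin(ωt)|`
(with `sup f = 1`, `inf f = 0`) satisfies condition (P2). -/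
theorem stmt5 (ω : ℝ) (hω : 0 < ω) :
    ¬ ∃ τ : ℝ, ∀ t : ℝ, |Real.sin (ω * t)| = 1 - |Real.sin (ω * (t + τ))| := by
  rintro ⟨τ, h⟩
  have h0 := h 0
  simp at h0
  -- h0 : |sin (ω * τ)| = 1  (after simp?)
  have hs : |Real.sin (ω * τ)| = 1 := by
    have := h 0
    simp only [mul_zero, Real.sin_zero, abs_zero, zero_add] at this
    linarith
  have hc : Real.cos (ω * τ) = 0 := by
    have h1 : Real.sin (ω * τ) ^ 2 = 1 := by
      rw [← sq_abs, hs]; norm_num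
    nlinarith [Real.sin_sq_add_cos_sq (ω * τ)]
  have ht := h (Real.pi / (4 * ω))
  have hωt : ω * (Real.pi / (4 * ω)) = Real.pi / 4 := by
    field_simp
  rw [mul_add, hωt, Real.sin_add, hc, Real.sin_pi_div_four] at ht
  have h2 : (0:ℝ) < Real.sqrt 2 / 2 := by positivity
  rw [abs_of_pos h2] at ht
  have : |Real.sqrt 2 / 2 * Real.sin (ω * τ)| = Real.sqrt 2 / 2 := by
    rw [abs_mul, hs, abs_of_pos h2, mul_one]
  rw [mul_zero, zero_add, Real.cos_pi_div_four] at ht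
  rw [this] at ht
  nlinarith [Real.sq_sqrt (by norm_num : (2:ℝ) ≥ 0), Real.sqrt_nonneg 2]
end

section
/- Let F be a real normed vector space (complete), let v⋆ : ℝ → F be three times continuously differentiable on an open neighborhood of 0, let ω > 0 and T = 2π/ω. Then the function γ ↦ (1/T)·∫₀ᵀ v⋆(γ·sin(ωt)) dt − v⋆(0) − (γ²/4)·(iteratedDeriv 2 v⋆ 0) is big-O of γ³ as γ → 0. -/
open MeasureTheory Set

section aux
variable {F : Type*} [NormedAddCommGroup F] [NormedSpace ℝ F]

lemma aux_open (v : ℝ → F) {U : Set ℝ} (hU : IsOpen U) (k : ℕ) {x : ℝ} (hx : x ∈ U) :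
    iteratedDerivWithin k v U x = iteratedDeriv k v x := by
  rw [iteratedDerivWithin_eq_iteratedFDerivWithin, iteratedDeriv_eq_iteratedFDeriv,
    iteratedFDerivWithin_of_isOpen k hU hx]

lemma aux_within (v : ℝ → F) {U s : Set ℝ} (hU : IsOpen U) (hv : ContDiffOn ℝ 3 v U)
    (hs : UniqueDiffOn ℝ s) (hsub : s ⊆ U) :
    ∀ k : ℕ, k ≤ 3 → ∀ x ∈ s, iteratedDerivWithin k v s x = iteratedDeriv k v x := by
  intro k
  induction k with
  | zero => intro _ x hx; simp
  | succ k ih =>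
    intro hk x hx
    rw [iteratedDerivWithin_succ, iteratedDeriv_succ]
    rw [derivWithin_congr (fun y hy => ih (by omega) y hy) (ih (by omega) x hx)]
    have hdiffW : DifferentiableOn ℝ (iteratedDerivWithin k v U) U :=
      hv.differentiableOn_iteratedDerivWithin (by exact_mod_cast by omega) hU.uniqueDiffOn
    have hdiff : DifferentiableOn ℝ (iteratedDeriv k v) U :=
      hdiffW.congr (fun y hy => (aux_open v hU k hy).symm)
    exact (hdiff.differentiableAt (hU.mem_nhds (hsub hx))).derivWithin (hs x hx)

end aux

section taylor
variable {F : Type*} [NormedAddCommGroup F] [NormedSpace ℝ F]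

lemma taylor_expand_eval (f : ℝ → F) {U : Set ℝ} (hU : IsOpen U) (hf : ContDiffOn ℝ 3 f U)
    {δ : ℝ} (hδ : 0 < δ) (hsub : Icc 0 δ ⊆ U) (x : ℝ) :
    taylorWithinEval f 2 (Icc 0 δ) 0 x =
      f 0 + x • iteratedDeriv 1 f 0 + (2⁻¹ * x ^ 2) • iteratedDeriv 2 f 0 := by
  have h0 : (0 : ℝ) ∈ Icc 0 δ := ⟨le_refl _, hδ.le⟩
  have hud : UniqueDiffOn ℝ (Icc 0 δ) := uniqueDiffOn_Icc hδ
  rw [taylor_within_apply]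
  rw [Finset.sum_range_succ, Finset.sum_range_succ, Finset.sum_range_one]
  rw [aux_within f hU hf hud hsub 0 (by norm_num) 0 h0,
    aux_within f hU hf hud hsub 1 (by norm_num) 0 h0,
    aux_within f hU hf hud hsub 2 (by norm_num) 0 h0]
  norm_num

lemma taylor_bd (v : ℝ → F) {U : Set ℝ} (hU : IsOpen U) (h0 : (0 : ℝ) ∈ U)
    (hv : ContDiffOn ℝ 3 v U) :
    ∃ δ > 0, Icc (-δ) δ ⊆ U ∧ ∃ C : ℝ, 0 ≤ C ∧ ∀ x : ℝ, |x| ≤ δ →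
      ‖v x - v 0 - x • deriv v 0 - (2⁻¹ * x ^ 2) • iteratedDeriv 2 v 0‖ ≤ C * |x| ^ 3 := by
  obtain ⟨ε, εpos, hball⟩ := Metric.isOpen_iff.mp hU 0 h0
  set δ := ε / 2 with hδdef
  have δpos : 0 < δ := by positivity
  have hδU : Icc (-δ) δ ⊆ U := by
    intro x hx
    apply hball
    rw [Metric.mem_ball, Real.dist_eq, sub_zero]
    have := abs_le.mpr ⟨hx.1, hx.2⟩
    linarith
  have hIccR : Icc (0:ℝ) δ ⊆ U := (Icc_subset_Icc (by linarith) le_rfl).trans hδU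
  -- right side
  have hv1 : ContDiffOn ℝ ((2:ℕ) + 1) v (Icc 0 δ) := by
    exact_mod_cast hv.mono hIccR
  obtain ⟨C₁, hC₁⟩ := exists_taylor_mean_remainder_bound (n := 2) δpos.le hv1
  -- left side : w x = v (-x)
  set w : ℝ → F := fun x => v (-x) with hwdef
  set U' : Set ℝ := (fun x : ℝ => -x) ⁻¹' U with hU'def
  have hU' : IsOpen U' := hU.preimage continuous_neg
  have hw : ContDiffOn ℝ 3 w U' :=
    hv.comp (contDiff_neg.contDiffOn) (fun x hx => hx)
  have hIccL : Icc (0:ℝ) δ ⊆ U' := by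
    intro x hx
    rw [mem_Icc] at hx
    simp only [hU'def, Set.mem_preimage]
    exact hδU ⟨by linarith [hx.2], by linarith [hx.1, δpos.le]⟩
  have hw1 : ContDiffOn ℝ ((2:ℕ) + 1) w (Icc 0 δ) := by
    exact_mod_cast hw.mono hIccL
  obtain ⟨C₂, hC₂⟩ := exists_taylor_mean_remainder_bound (n := 2) δpos.le hw1
  refine ⟨δ, δpos, hδU, max (max C₁ C₂) 0, le_max_right _ _, ?_⟩
  intro x hx
  rcases le_or_gt 0 x with hx0 | hx0
  · have hmem : x ∈ Icc (0:ℝ) δ := ⟨hx0, (abs_le.mp hx).2⟩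
    have := hC₁ x hmem
    rw [taylor_expand_eval v hU hv δpos hIccR, iteratedDeriv_one] at this
    have hxabs : |x| = x := abs_of_nonneg hx0
    calc ‖v x - v 0 - x • deriv v 0 - (2⁻¹ * x ^ 2) • iteratedDeriv 2 v 0‖
        = ‖v x - (v 0 + x • deriv v 0 + (2⁻¹ * x ^ 2) • iteratedDeriv 2 v 0)‖ := by
          congr 1; abel
      _ ≤ C₁ * (x - 0) ^ (2 + 1) := this
      _ ≤ max (max C₁ C₂) 0 * |x| ^ 3 := by
          rw [sub_zero, hxabs]
          exact mul_le_mul_of_nonneg_right ((le_max_left C₁ C₂).trans (le_max_left _ _))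
            (by positivity)
  · have hmem : -x ∈ Icc (0:ℝ) δ := ⟨by linarith, by linarith [(abs_le.mp hx).1]⟩
    have := hC₂ (-x) hmem
    rw [taylor_expand_eval w hU' hw δpos hIccL] at this
    have e1 : iteratedDeriv 1 w 0 = -iteratedDeriv 1 v 0 := by
      rw [hwdef, iteratedDeriv_comp_neg 1 v 0, neg_zero]; simp
    have e2 : iteratedDeriv 2 w 0 = iteratedDeriv 2 v 0 := by
      rw [hwdef, iteratedDeriv_comp_neg 2 v 0, neg_zero]; simp
    have hxabs : |x| = -x := abs_of_neg hx0
    calc ‖v x - v 0 - x • deriv v 0 - (2⁻¹ * x ^ 2) • iteratedDeriv 2 v 0‖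
        = ‖w (-x) - (w 0 + (-x) • iteratedDeriv 1 w 0 +
            (2⁻¹ * (-x) ^ 2) • iteratedDeriv 2 w 0)‖ := by
          rw [e1, e2, hwdef]
          simp only [neg_neg]
          rw [← iteratedDeriv_one]
          congr 1
          have : (-x) • -iteratedDeriv 1 v 0 = x • iteratedDeriv 1 v 0 := by
            rw [neg_smul, smul_neg, neg_neg]
          rw [this]
          ring_nf
          abel
      _ ≤ C₂ * (-x - 0) ^ (2 + 1) := this
      _ ≤ max (max C₁ C₂) 0 * |x| ^ 3 := by
          rw [sub_zero, hxabs]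
          exact mul_le_mul_of_nonneg_right ((le_max_right C₁ C₂).trans (le_max_left _ _))
            (pow_nonneg (by linarith) 3)

end taylor

section trig

lemma sin_int {ω T : ℝ} (hω : 0 < ω) (hT : T = 2 * Real.pi / ω) :
    ∫ t in (0:ℝ)..T, Real.sin (ω * t) = 0 := by
  have hωT : ω * T = 2 * Real.pi := by rw [hT]; field_simp
  rw [intervalIntegral.integral_comp_mul_left (fun x => Real.sin x) hω.ne']
  rw [mul_zero, hωT, integral_sin, Real.cos_zero, Real.cos_two_pi]
  simp

lemma sin_sq_int {ω T : ℝ} (hω : 0 < ω) (hT : T = 2 * Real.pi / ω) :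
    ∫ t in (0:ℝ)..T, Real.sin (ω * t) ^ 2 = T / 2 := by
  have hωT : ω * T = 2 * Real.pi := by rw [hT]; field_simp
  rw [intervalIntegral.integral_comp_mul_left (fun x => Real.sin x ^ 2) hω.ne']
  rw [mul_zero, hωT, integral_sin_sq]
  rw [Real.sin_two_pi, Real.sin_zero, hT]
  simp only [smul_eq_mul]
  field_simp
  ring

end trig


/-- For `v⋆ : ℝ → F` three times continuously differentiable near `0`,
`ω > 0` and `T = 2π/ω`, the Fourier coefficient
`a(γ) = (1/T)·∫₀ᵀ v⋆(γ sin(ωt)) dt` satisfies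
`a(γ) − v⋆(0) − (γ²/4)·v⋆''(0) = O(γ³)` as `γ → 0`. -/
theorem stmt8 {F : Type*} [NormedAddCommGroup F] [NormedSpace ℝ F] [CompleteSpace F]
    (v : ℝ → F) (U : Set ℝ) (hU : IsOpen U) (h0 : (0 : ℝ) ∈ U)
    (hv : ContDiffOn ℝ 3 v U) (ω T : ℝ) (hω : 0 < ω) (hT : T = 2 * Real.pi / ω) :
    Asymptotics.IsBigO (nhds (0 : ℝ))
      (fun γ : ℝ =>
        (1 / T) • (∫ t in (0 : ℝ)..T, v (γ * Real.sin (ω * t))) - v 0 -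
          (γ ^ 2 / 4) • iteratedDeriv 2 v 0)
      (fun γ : ℝ => γ ^ 3) := by
  obtain ⟨δ, δpos, hδU, C, hC0, hC⟩ := taylor_bd v hU h0 hv
  have hπ := Real.pi_pos
  have hTpos : 0 < T := by rw [hT]; positivity
  rw [Asymptotics.isBigO_iff]
  refine ⟨C, ?_⟩
  filter_upwards [Metric.ball_mem_nhds (0:ℝ) δpos] with γ hγ
  rw [Metric.mem_ball, Real.dist_eq, sub_zero] at hγ
  have hγδ : |γ| ≤ δ := hγ.le
  have hgb : ∀ t : ℝ, |γ * Real.sin (ω * t)| ≤ |γ| := by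
    intro t
    rw [abs_mul]
    calc |γ| * |Real.sin (ω * t)| ≤ |γ| * 1 :=
          mul_le_mul_of_nonneg_left (Real.abs_sin_le_one _) (abs_nonneg _)
      _ = |γ| := mul_one _
  have hgcont : Continuous fun t : ℝ => γ * Real.sin (ω * t) := by continuity
  have hvg : Continuous fun t : ℝ => v (γ * Real.sin (ω * t)) :=
    hv.continuousOn.comp_continuous hgcont
      (fun t => hδU (mem_Icc.mpr (abs_le.mp ((hgb t).trans hγδ))))
  have i1 : IntervalIntegrable (fun t : ℝ => v (γ * Real.sin (ω * t))) volume 0 T :=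
    hvg.intervalIntegrable 0 T
  have i2 : IntervalIntegrable (fun t : ℝ => (γ * Real.sin (ω * t)) • deriv v 0) volume 0 T :=
    (hgcont.smul continuous_const).intervalIntegrable 0 T
  have i3 : IntervalIntegrable
      (fun t : ℝ => (2⁻¹ * (γ * Real.sin (ω * t)) ^ 2) • iteratedDeriv 2 v 0) volume 0 T :=
    (((continuous_const.mul (hgcont.pow 2))).smul continuous_const).intervalIntegrable 0 T
  have key : (∫ t in (0:ℝ)..T, (v (γ * Real.sin (ω * t)) - v 0 -
        (γ * Real.sin (ω * t)) • deriv v 0 -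
        (2⁻¹ * (γ * Real.sin (ω * t)) ^ 2) • iteratedDeriv 2 v 0))
      = (∫ t in (0:ℝ)..T, v (γ * Real.sin (ω * t))) - T • v 0 -
        (γ ^ 2 * T / 4) • iteratedDeriv 2 v 0 := by
    have eqfun : (fun t : ℝ => v (γ * Real.sin (ω * t)) - v 0 -
          (γ * Real.sin (ω * t)) • deriv v 0 -
          (2⁻¹ * (γ * Real.sin (ω * t)) ^ 2) • iteratedDeriv 2 v 0) =
        fun t : ℝ => v (γ * Real.sin (ω * t)) - ((v 0 + (γ * Real.sin (ω * t)) • deriv v 0) +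
          (2⁻¹ * (γ * Real.sin (ω * t)) ^ 2) • iteratedDeriv 2 v 0) := by
      funext t; abel
    rw [eqfun, intervalIntegral.integral_sub i1 ((intervalIntegrable_const.add i2).add i3),
      intervalIntegral.integral_add (intervalIntegrable_const.add i2) i3,
      intervalIntegral.integral_add intervalIntegrable_const i2,
      intervalIntegral.integral_const,
      intervalIntegral.integral_smul_const, intervalIntegral.integral_smul_const]
    have e1 : (∫ t in (0:ℝ)..T, γ * Real.sin (ω * t)) = 0 := by
      rw [intervalIntegral.integral_const_mul, sin_int hω hT, mul_zero]
    have e2 : (∫ t in (0:ℝ)..T, 2⁻¹ * (γ * Real.sin (ω * t)) ^ 2) = γ ^ 2 * T / 4 := by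
      have : (fun t : ℝ => 2⁻¹ * (γ * Real.sin (ω * t)) ^ 2) =
          fun t : ℝ => (2⁻¹ * γ ^ 2) * Real.sin (ω * t) ^ 2 := by
        funext t; ring
      rw [this, intervalIntegral.integral_const_mul, sin_sq_int hω hT]; ring
    rw [e1, e2, sub_zero, zero_smul]
    abel
  have main : (1 / T) • (∫ t in (0:ℝ)..T, v (γ * Real.sin (ω * t))) - v 0 -
        (γ ^ 2 / 4) • iteratedDeriv 2 v 0
      = (1 / T) • (∫ t in (0:ℝ)..T, (v (γ * Real.sin (ω * t)) - v 0 -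
        (γ * Real.sin (ω * t)) • deriv v 0 -
        (2⁻¹ * (γ * Real.sin (ω * t)) ^ 2) • iteratedDeriv 2 v 0)) := by
    rw [key, smul_sub, smul_sub, smul_smul, smul_smul]
    have e3 : (1 / T) * T = 1 := by field_simp
    have e4 : (1 / T) * (γ ^ 2 * T / 4) = γ ^ 2 / 4 := by field_simp
    rw [e3, e4, one_smul]
  rw [main]
  have bound : ∀ t ∈ Set.uIoc (0:ℝ) T, ‖v (γ * Real.sin (ω * t)) - v 0 -
      (γ * Real.sin (ω * t)) • deriv v 0 -
      (2⁻¹ * (γ * Real.sin (ω * t)) ^ 2) • iteratedDeriv 2 v 0‖ ≤ C * |γ| ^ 3 := by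
    intro t _
    refine (hC (γ * Real.sin (ω * t)) ((hgb t).trans hγδ)).trans ?_
    exact mul_le_mul_of_nonneg_left (pow_le_pow_left₀ (abs_nonneg _) (hgb t) 3) hC0
  calc ‖(1 / T) • (∫ t in (0:ℝ)..T, (v (γ * Real.sin (ω * t)) - v 0 -
        (γ * Real.sin (ω * t)) • deriv v 0 -
        (2⁻¹ * (γ * Real.sin (ω * t)) ^ 2) • iteratedDeriv 2 v 0))‖
      = (1 / T) * ‖∫ t in (0:ℝ)..T, (v (γ * Real.sin (ω * t)) - v 0 -
        (γ * Real.sin (ω * t)) • deriv v 0 -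
        (2⁻¹ * (γ * Real.sin (ω * t)) ^ 2) • iteratedDeriv 2 v 0)‖ := by
        rw [norm_smul, Real.norm_eq_abs, abs_of_pos (by positivity)]
    _ ≤ (1 / T) * (C * |γ| ^ 3 * |T - 0|) :=
        mul_le_mul_of_nonneg_left
          (intervalIntegral.norm_integral_le_of_norm_le_const bound) (by positivity)
    _ = C * |γ| ^ 3 := by rw [sub_zero, abs_of_pos hTpos]; field_simp
    _ = C * ‖γ ^ 3‖ := by rw [Real.norm_eq_abs, abs_pow]
end

section
/- Let F be a real normed vector space (complete), let v⋆ : ℝ → F be three times continuously differentiable on an open neighborhood of 0, let ω > 0 and T = 2π/ω. Then the function γ ↦ (2/T)·∫₀ᵀ sin(ωt) • v⋆(γ·sin(ωt)) dt − γ • (deriv v⋆ 0) is big-O of γ³ as γ → 0. -/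
open MeasureTheory

lemma stmt9_taylor {F : Type*} [NormedAddCommGroup F] [NormedSpace ℝ F]
    (v : ℝ → F) (U : Set ℝ) (hU : IsOpen U) (hv : ContDiffOn ℝ 3 v U)
    (δ : ℝ) (hδ : 0 < δ) (hsub : Set.Icc (-δ) δ ⊆ U) :
    ∃ C ≥ (0:ℝ), ∀ x ∈ Set.Icc (-δ) δ,
      ‖v x - v 0 - x • deriv v 0 - (x^2/2) • deriv (deriv v) 0‖ ≤ C * |x|^3 := by
  set v1 := deriv v with hv1def
  set v2 := deriv v1 with hv2def
  set v3 := deriv v2 with hv3def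
  have hv1 : ContDiffOn ℝ 2 v1 U := hv.deriv_of_isOpen hU (by norm_num)
  have hv2 : ContDiffOn ℝ 1 v2 U := hv1.deriv_of_isOpen hU (by norm_num)
  have hd1 : ∀ x ∈ U, HasDerivAt v (v1 x) x := fun x hx =>
    ((hv.differentiableOn (by norm_num) x hx).differentiableAt (hU.mem_nhds hx)).hasDerivAt
  have hd2 : ∀ x ∈ U, HasDerivAt v1 (v2 x) x := fun x hx =>
    ((hv1.differentiableOn (by norm_num) x hx).differentiableAt (hU.mem_nhds hx)).hasDerivAt
  have hd3 : ∀ x ∈ U, HasDerivAt v2 (v3 x) x := fun x hx =>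
    ((hv2.differentiableOn (by norm_num) x hx).differentiableAt (hU.mem_nhds hx)).hasDerivAt
  set s := Set.Icc (-δ) δ with hsdef
  have hconv : Convex ℝ s := convex_Icc _ _
  have h0s : (0:ℝ) ∈ s := ⟨by linarith, by linarith⟩
  obtain ⟨C0, hC0⟩ := isCompact_Icc.exists_bound_of_continuousOn
    ((hv2.continuousOn_deriv_of_isOpen hU le_rfl).mono hsub)
  set C := max C0 0 with hCdef
  have hC : (0:ℝ) ≤ C := le_max_right _ _
  have hC3 : ∀ x ∈ s, ‖v3 x‖ ≤ C := fun x hx => (hC0 x hx).trans (le_max_left _ _)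
  have huIcc : ∀ x ∈ s, Set.uIcc 0 x ⊆ s := fun x hx => Set.ordConnected_Icc.uIcc_subset h0s hx
  have habs : ∀ x : ℝ, ∀ y ∈ Set.uIcc (0:ℝ) x, |y| ≤ |x| := by
    intro x y hy
    rcases Set.mem_uIcc.1 hy with ⟨h1, h2⟩ | ⟨h1, h2⟩
    · rw [abs_of_nonneg h1]; exact h2.trans (le_abs_self x)
    · rw [abs_of_nonpos h2]; exact (neg_le_neg h1).trans (neg_le_abs x)
  -- step A
  have hA : ∀ x ∈ s, ‖v2 x - v2 0‖ ≤ C * |x| := by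
    intro x hx
    have := hconv.norm_image_sub_le_of_norm_hasDerivWithin_le
      (fun y hy => (hd3 y (hsub hy)).hasDerivWithinAt) hC3 h0s hx
    simpa [Real.norm_eq_abs] using this
  -- step B
  set g1 : ℝ → F := fun x => v1 x - v1 0 - x • v2 0 with hg1def
  have hg1d : ∀ x ∈ U, HasDerivAt g1 (v2 x - v2 0) x := by
    intro x hx
    have h1 : HasDerivAt (fun y : ℝ => v1 y - v1 0) (v2 x) x := (hd2 x hx).sub_const _
    have h2 : HasDerivAt (fun y : ℝ => y • v2 0) (v2 0) x := by
      simpa using (hasDerivAt_id x).smul_const (v2 0)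
    exact h1.sub h2
  have hg10 : g1 0 = 0 := by simp [hg1def]
  have hB : ∀ x ∈ s, ‖g1 x‖ ≤ C * |x|^2 := by
    intro x hx
    have key := (convex_uIcc (0:ℝ) x).norm_image_sub_le_of_norm_hasDerivWithin_le
      (fun y hy => (hg1d y (hsub (huIcc x hx hy))).hasDerivWithinAt)
      (fun y hy => (hA y (huIcc x hx hy)).trans
        (mul_le_mul_of_nonneg_left (habs x y hy) hC))
      Set.left_mem_uIcc Set.right_mem_uIcc
    rw [hg10, sub_zero, sub_zero, Real.norm_eq_abs] at key
    calc ‖g1 x‖ ≤ C * |x| * |x| := key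
      _ = C * |x|^2 := by ring
  -- step C
  set g : ℝ → F := fun x => v x - v 0 - x • v1 0 - (x^2/2) • v2 0 with hgdef
  have hgd : ∀ x ∈ U, HasDerivAt g (g1 x) x := by
    intro x hx
    have h1 : HasDerivAt (fun y : ℝ => v y - v 0) (v1 x) x := (hd1 x hx).sub_const _
    have h2 : HasDerivAt (fun y : ℝ => y • v1 0) (v1 0) x := by
      simpa using (hasDerivAt_id x).smul_const (v1 0)
    have h3 : HasDerivAt (fun y : ℝ => (y^2/2) • v2 0) (x • v2 0) x := by
      have := (((hasDerivAt_pow 2 x).div_const 2).smul_const (v2 0))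
      simpa using this
    exact (h1.sub h2).sub h3
  have hg0 : g 0 = 0 := by simp [hgdef]
  refine ⟨C, hC, fun x hx => ?_⟩
  have key := (convex_uIcc (0:ℝ) x).norm_image_sub_le_of_norm_hasDerivWithin_le
    (fun y hy => (hgd y (hsub (huIcc x hx hy))).hasDerivWithinAt)
    (fun y hy => (hB y (huIcc x hx hy)).trans
      (mul_le_mul_of_nonneg_left (pow_le_pow_left₀ (abs_nonneg _) (habs x y hy) 2) hC))
    Set.left_mem_uIcc Set.right_mem_uIcc
  rw [hg0, sub_zero, sub_zero, Real.norm_eq_abs] at key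
  calc ‖v x - v 0 - x • deriv v 0 - (x^2/2) • deriv (deriv v) 0‖ = ‖g x‖ := rfl
    _ ≤ C * |x|^2 * |x| := key
    _ = C * |x|^3 := by ring

/-- For `v⋆ : ℝ → F` three times continuously differentiable near `0`,
`ω > 0` and `T = 2π/ω`, the Fourier coefficient
`b(γ) = (2/T)·∫₀ᵀ sin(ωt) • v⋆(γ sin(ωt)) dt` satisfies
`b(γ) − γ • v⋆'(0) = O(γ³)` as `γ → 0`. -/
theorem stmt9 {F : Type*} [NormedAddCommGroup F] [NormedSpace ℝ F] [CompleteSpace F]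
    (v : ℝ → F) (U : Set ℝ) (hU : IsOpen U) (h0 : (0 : ℝ) ∈ U)
    (hv : ContDiffOn ℝ 3 v U) (ω T : ℝ) (hω : 0 < ω) (hT : T = 2 * Real.pi / ω) :
    Asymptotics.IsBigO (nhds (0 : ℝ))
      (fun γ : ℝ =>
        (2 / T) • (∫ t in (0 : ℝ)..T, Real.sin (ω * t) • v (γ * Real.sin (ω * t))) -
          γ • deriv v 0)
      (fun γ : ℝ => γ ^ 3) := by
  have taylor : ∃ δ > (0:ℝ), Set.Icc (-δ) δ ⊆ U ∧ ∃ C ≥ (0:ℝ), ∀ x ∈ Set.Icc (-δ) δ,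
      ‖v x - v 0 - x • deriv v 0 - (x^2/2) • deriv (deriv v) 0‖ ≤ C * |x|^3 := by
    obtain ⟨ε, hε, hball⟩ := Metric.isOpen_iff.1 hU 0 h0
    have hsub : Set.Icc (-(ε/2)) (ε/2) ⊆ U := by
      intro x hx
      apply hball
      rw [Metric.mem_ball, Real.dist_eq, sub_zero]
      have := abs_le.2 ⟨hx.1, hx.2⟩
      linarith
    exact ⟨ε/2, by linarith, hsub, stmt9_taylor v U hU hv (ε/2) (by linarith) hsub⟩
  obtain ⟨δ, hδ, hsub, C, hC, hCb⟩ := taylor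
  have hπ := Real.pi_pos
  have hTpos : 0 < T := by rw [hT]; positivity
  have hωT : ω * T = 2 * Real.pi := by rw [hT]; field_simp
  have hI1 : ∫ t in (0:ℝ)..T, Real.sin (ω*t) = 0 := by
    rw [intervalIntegral.integral_comp_mul_left (fun x => Real.sin x) hω.ne']
    simp [hωT, integral_sin, Real.cos_two_pi]
  have hI2 : ∫ t in (0:ℝ)..T, Real.sin (ω*t)^2 = T/2 := by
    rw [intervalIntegral.integral_comp_mul_left (fun x => Real.sin x ^ 2) hω.ne']
    rw [mul_zero, hωT, integral_sin_sq]
    simp [Real.sin_two_pi, Real.cos_two_pi, smul_eq_mul]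
    field_simp
    nlinarith [hωT]
  have hI3 : ∫ t in (0:ℝ)..T, Real.sin (ω*t)^3 = 0 := by
    rw [intervalIntegral.integral_comp_mul_left (fun x => Real.sin x ^ 3) hω.ne']
    rw [mul_zero, hωT, show (3:ℕ) = 1 + 2 from rfl, integral_sin_pow]
    simp [Real.sin_two_pi, Real.cos_two_pi, integral_sin]
  set c1 := deriv v 0 with hc1
  set c2 := deriv (deriv v) 0 with hc2
  set g : ℝ → F := fun x => v x - v 0 - x • c1 - (x^2/2) • c2 with hgdef
  have hScont : Continuous fun t : ℝ => Real.sin (ω * t) := by fun_prop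
  have key : ∀ γ : ℝ, |γ| ≤ δ →
      ‖(2/T) • (∫ t in (0:ℝ)..T, Real.sin (ω*t) • v (γ * Real.sin (ω*t))) - γ • c1‖
        ≤ (2*C) * ‖γ^3‖ := by
    intro γ hγ
    have hmem : ∀ t : ℝ, γ * Real.sin (ω*t) ∈ Set.Icc (-δ) δ := by
      intro t
      have : |γ * Real.sin (ω*t)| ≤ δ := by
        rw [abs_mul]
        calc |γ| * |Real.sin (ω*t)| ≤ δ * 1 :=
          mul_le_mul hγ (Real.abs_sin_le_one _) (abs_nonneg _) hδ.le
        _ = δ := mul_one δ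
      exact abs_le.1 this
    have hvc : Continuous fun t : ℝ => v (γ * Real.sin (ω*t)) := by
      refine hv.continuousOn.comp_continuous (by fun_prop) fun t => hsub (hmem t)
    have hgc : Continuous fun t : ℝ => g (γ * Real.sin (ω*t)) := by
      simp only [hgdef]
      exact ((hvc.sub continuous_const).sub
        ((continuous_const.mul hScont).smul continuous_const)).sub
        ((((continuous_const.mul hScont).pow 2).div_const 2).smul continuous_const)
    have hpt : ∀ t : ℝ, Real.sin (ω*t) • v (γ * Real.sin (ω*t)) =
        Real.sin (ω*t) • v 0 + (γ * Real.sin (ω*t)^2) • c1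
        + ((γ^2/2) * Real.sin (ω*t)^3) • c2
        + Real.sin (ω*t) • g (γ * Real.sin (ω*t)) := by
      intro t
      simp only [hgdef]
      match_scalars <;> ring
    have i1 : IntervalIntegrable (fun t => Real.sin (ω*t) • v 0) volume 0 T :=
      (hScont.smul continuous_const).intervalIntegrable _ _
    have i2 : IntervalIntegrable (fun t => (γ * Real.sin (ω*t)^2) • c1) volume 0 T :=
      (((continuous_const.mul (hScont.pow 2))).smul continuous_const).intervalIntegrable _ _
    have i3 : IntervalIntegrable (fun t => ((γ^2/2) * Real.sin (ω*t)^3) • c2) volume 0 T :=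
      (((continuous_const.mul (hScont.pow 3))).smul continuous_const).intervalIntegrable _ _
    have i4 : IntervalIntegrable (fun t => Real.sin (ω*t) • g (γ * Real.sin (ω*t))) volume 0 T :=
      (hScont.smul hgc).intervalIntegrable _ _
    have hInt : (∫ t in (0:ℝ)..T, Real.sin (ω*t) • v (γ * Real.sin (ω*t)))
        = (γ * (T/2)) • c1 + ∫ t in (0:ℝ)..T, Real.sin (ω*t) • g (γ * Real.sin (ω*t)) := by
      rw [intervalIntegral.integral_congr (g := fun t => Real.sin (ω*t) • v 0
          + (γ * Real.sin (ω*t)^2) • c1 + ((γ^2/2) * Real.sin (ω*t)^3) • c2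
          + Real.sin (ω*t) • g (γ * Real.sin (ω*t))) (fun t _ => hpt t)]
      rw [intervalIntegral.integral_add ((i1.add i2).add i3) i4,
        intervalIntegral.integral_add (i1.add i2) i3,
        intervalIntegral.integral_add i1 i2,
        intervalIntegral.integral_smul_const, intervalIntegral.integral_smul_const,
        intervalIntegral.integral_smul_const, hI1,
        intervalIntegral.integral_const_mul, intervalIntegral.integral_const_mul, hI2, hI3]
      simp
    have hre : (2/T) • (∫ t in (0:ℝ)..T, Real.sin (ω*t) • v (γ * Real.sin (ω*t))) - γ • c1
        = (2/T) • ∫ t in (0:ℝ)..T, Real.sin (ω*t) • g (γ * Real.sin (ω*t)) := by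
      rw [hInt, smul_add, smul_smul]
      have h2T : (2/T) * (γ * (T/2)) = γ := by field_simp
      rw [h2T]
      abel
    rw [hre]
    have hbound : ‖∫ t in (0:ℝ)..T, Real.sin (ω*t) • g (γ * Real.sin (ω*t))‖
        ≤ C * |γ|^3 * |T - 0| := by
      apply intervalIntegral.norm_integral_le_of_norm_le_const
      intro t _
      rw [norm_smul, Real.norm_eq_abs]
      calc |Real.sin (ω*t)| * ‖g (γ * Real.sin (ω*t))‖
          ≤ 1 * (C * |γ * Real.sin (ω*t)|^3) :=
            mul_le_mul (Real.abs_sin_le_one _) (hCb _ (hmem t)) (norm_nonneg _) zero_le_one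
        _ ≤ C * |γ|^3 := by
            rw [one_mul]
            refine mul_le_mul_of_nonneg_left ?_ hC
            refine pow_le_pow_left₀ (abs_nonneg _) ?_ 3
            rw [abs_mul]
            calc |γ| * |Real.sin (ω*t)| ≤ |γ| * 1 :=
              mul_le_mul_of_nonneg_left (Real.abs_sin_le_one _) (abs_nonneg _)
            _ = |γ| := mul_one _
    calc ‖(2/T) • ∫ t in (0:ℝ)..T, Real.sin (ω*t) • g (γ * Real.sin (ω*t))‖
        = (2/T) * ‖∫ t in (0:ℝ)..T, Real.sin (ω*t) • g (γ * Real.sin (ω*t))‖ := by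
          rw [norm_smul, Real.norm_eq_abs, abs_of_pos (by positivity)]
      _ ≤ (2/T) * (C * |γ|^3 * |T - 0|) :=
          mul_le_mul_of_nonneg_left hbound (by positivity)
      _ = (2*C) * ‖γ^3‖ := by
          rw [sub_zero, abs_of_pos hTpos, Real.norm_eq_abs, abs_pow]
          field_simp
  rw [Asymptotics.isBigO_iff]
  refine ⟨2*C, ?_⟩
  filter_upwards [Metric.closedBall_mem_nhds (0:ℝ) hδ] with γ hγ
  exact key γ (by simpa [Real.dist_eq] using hγ)
end

section
/- (Equilibrium propagation formula.) Let Θ = EuclideanSpace ℝ (Fin m) and V = EuclideanSpace ℝ (Fin n). Let E : Θ → V → ℝ be C² as a function on Θ × V, let C : V → ℝ be C¹, and let v⋆ : Θ → ℝ → V be C¹ as a function on Θ × ℝ, satisfying for all θ ∈ Θ and β ∈ ℝ the equilibrium condition gradient (fun w => E θ w + β·C w) (v⋆ θ β) = 0. Define the loss L : Θ → ℝ by L θ = C (v⋆ θ 0). Then for all θ ∈ Θ and all directions h ∈ Θ, fderiv ℝ L θ h = deriv (fun β => fderiv ℝ (fun θ' => E θ' (v⋆ θ β)) θ h) 0. 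-/
open ContinuousLinearMap

theorem eqprop_aux {Θ V : Type*} [NormedAddCommGroup Θ] [NormedSpace ℝ Θ]
    [NormedAddCommGroup V] [InnerProductSpace ℝ V] [CompleteSpace V]
    (E : Θ → V → ℝ) (hE : ContDiff ℝ 2 fun p : Θ × V => E p.1 p.2)
    (C : V → ℝ) (hC : ContDiff ℝ 1 C)
    (v : Θ → ℝ → V) (hv : ContDiff ℝ 1 fun p : Θ × ℝ => v p.1 p.2)
    (heq : ∀ θ β, gradient (fun w => E θ w + β * C w) (v θ β) = 0)
    (θ h : Θ) :
    fderiv ℝ (fun θ' => C (v θ' 0)) θ h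
      = deriv (fun β : ℝ => fderiv ℝ (fun θ' => E θ' (v θ β)) θ h) 0 := by
  have hEd : Differentiable ℝ (fun p : Θ × V => E p.1 p.2) :=
    hE.differentiable (by norm_num)
  have hvd : Differentiable ℝ (fun p : Θ × ℝ => v p.1 p.2) := hv.differentiable one_ne_zero
  have hCd : Differentiable ℝ C := hC.differentiable one_ne_zero
  set DE : Θ × V → (Θ × V →L[ℝ] ℝ) := fderiv ℝ (fun p : Θ × V => E p.1 p.2) with hDEdef
  set Dv : Θ × ℝ → (Θ × ℝ →L[ℝ] V) := fderiv ℝ (fun p : Θ × ℝ => v p.1 p.2) with hDvdef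
  set S : Θ × ℝ →L[ℝ] ℝ := ContinuousLinearMap.snd ℝ Θ ℝ with hSdef
  set Fst : Θ × ℝ →L[ℝ] Θ := ContinuousLinearMap.fst ℝ Θ ℝ with hFstdef
  set j : Θ × ℝ →L[ℝ] Θ × V := Fst.prod 0 with hjdef
  -- the equilibrium condition, in fderiv form
  have heq' : ∀ (θ₀ : Θ) (β₀ : ℝ) (u : V),
      DE (θ₀, v θ₀ β₀) (0, u) + β₀ * fderiv ℝ C (v θ₀ β₀) u = 0 := by
    intro θ₀ β₀ u
    have h0 : fderiv ℝ (fun w => E θ₀ w + β₀ * C w) (v θ₀ β₀) = 0 := by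
      have h1 := heq θ₀ β₀
      unfold gradient at h1
      have h2 := congrArg (InnerProductSpace.toDual ℝ V) h1
      simpa using h2
    have hA : HasFDerivAt (fun w : V => E θ₀ w)
        ((DE (θ₀, v θ₀ β₀)).comp ((0 : V →L[ℝ] Θ).prod (ContinuousLinearMap.id ℝ V)))
        (v θ₀ β₀) :=
      (hEd (θ₀, v θ₀ β₀)).hasFDerivAt.comp _
        ((hasFDerivAt_const θ₀ _).prodMk (hasFDerivAt_id _))
    have hB : HasFDerivAt (fun w : V => β₀ * C w) (β₀ • fderiv ℝ C (v θ₀ β₀)) (v θ₀ β₀) :=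
      ((hCd (v θ₀ β₀)).hasFDerivAt).const_mul β₀
    have hAB := (hA.add hB).fderiv
    change fderiv ℝ (fun w => E θ₀ w + β₀ * C w) (v θ₀ β₀) = _ at hAB
    rw [h0] at hAB
    have := congrFun (congrArg (fun T : V →L[ℝ] ℝ => (T : V → ℝ)) hAB) u
    simpa using this.symm
  -- the global function and its first derivative
  set Φ : Θ × ℝ → (Θ × ℝ →L[ℝ] ℝ) :=
    fun p => (DE (p.1, v p.1 p.2)).comp j + C (v p.1 p.2) • S with hΦdef
  have hΦ : ∀ p : Θ × ℝ,
      HasFDerivAt (fun q : Θ × ℝ => E q.1 (v q.1 q.2) + q.2 * C (v q.1 q.2)) (Φ p) p := by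
    rintro ⟨θ₀, β₀⟩
    have hψ : HasFDerivAt (fun q : Θ × ℝ => ((q.1, v q.1 q.2) : Θ × V))
        (Fst.prod (Dv (θ₀, β₀))) (θ₀, β₀) :=
      (hasFDerivAt_fst).prodMk (hvd (θ₀, β₀)).hasFDerivAt
    have h1 : HasFDerivAt (fun q : Θ × ℝ => E q.1 (v q.1 q.2))
        ((DE (θ₀, v θ₀ β₀)).comp (Fst.prod (Dv (θ₀, β₀)))) (θ₀, β₀) :=
      by exact (hEd (θ₀, v θ₀ β₀)).hasFDerivAt.comp (θ₀, β₀) hψ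
    have hCv : HasFDerivAt (fun q : Θ × ℝ => C (v q.1 q.2))
        ((fderiv ℝ C (v θ₀ β₀)).comp (Dv (θ₀, β₀))) (θ₀, β₀) :=
      (hCd (v θ₀ β₀)).hasFDerivAt.comp (θ₀, β₀) (hvd (θ₀, β₀)).hasFDerivAt
    have h2 : HasFDerivAt (fun q : Θ × ℝ => q.2 * C (v q.1 q.2))
        (β₀ • ((fderiv ℝ C (v θ₀ β₀)).comp (Dv (θ₀, β₀))) + C (v θ₀ β₀) • S) (θ₀, β₀) := by
      simpa using (hasFDerivAt_snd (𝕜 := ℝ) (E := Θ) (F := ℝ) (p := (θ₀, β₀))).fun_mul hCv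
    have h3 := h1.add h2
    refine h3.congr_fderiv ?_
    apply ContinuousLinearMap.ext
    rintro ⟨a, b⟩
    have hu := heq' θ₀ β₀ (Dv (θ₀, β₀) (a, b))
    have hsplit : ((a, Dv (θ₀, β₀) (a, b)) : Θ × V)
        = (a, 0) + (0, Dv (θ₀, β₀) (a, b)) := by simp
    simp only [hΦdef, ContinuousLinearMap.add_apply, ContinuousLinearMap.comp_apply,
      ContinuousLinearMap.prod_apply, ContinuousLinearMap.smul_apply,
      ContinuousLinearMap.coe_fst', ContinuousLinearMap.coe_snd',
      ContinuousLinearMap.zero_apply, hjdef, hFstdef, hSdef, smul_eq_mul]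
    rw [hsplit, map_add]
    linarith
  -- differentiability of Φ at (θ, 0)
  have hDEc : ContDiff ℝ 1 DE := hE.fderiv_right (by norm_num)
  have hΦd : DifferentiableAt ℝ Φ (θ, 0) := by
    apply DifferentiableAt.add
    · exact DifferentiableAt.clm_comp
        (DifferentiableAt.comp (θ, 0) (hDEc.differentiable one_ne_zero _)
          ((differentiableAt_fst).prodMk (hvd (θ, 0))))
        (differentiableAt_const j)
    · exact DifferentiableAt.smul
        (DifferentiableAt.comp (θ, 0) (hCd _) (hvd (θ, 0))) (differentiableAt_const S)
  set f'' : Θ × ℝ →L[ℝ] Θ × ℝ →L[ℝ] ℝ := fderiv ℝ Φ (θ, 0) with hf''def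
  have hf'' : HasFDerivAt Φ f'' (θ, 0) := hΦd.hasFDerivAt
  have hsym := second_derivative_symmetric hΦ hf''
  -- LHS
  have hL1 : (fun θ' : Θ => C (v θ' 0)) = fun θ' : Θ => Φ (θ', 0) ((0 : Θ), (1 : ℝ)) := by
    funext θ'
    simp [hΦdef, hjdef, hSdef, hFstdef]
    exact (DE (θ', v θ' 0)).map_zero
  have hLd : HasFDerivAt (fun θ' : Θ => Φ (θ', 0) ((0 : Θ), (1 : ℝ)))
      ((f''.comp ((ContinuousLinearMap.id ℝ Θ).prod 0)).flip ((0 : Θ), (1 : ℝ))) θ := by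
    have hι : HasFDerivAt (fun θ' : Θ => ((θ', 0) : Θ × ℝ))
        ((ContinuousLinearMap.id ℝ Θ).prod 0) θ :=
      (hasFDerivAt_id θ).prodMk (hasFDerivAt_const 0 θ)
    have h4 := (hf''.comp θ hι).clm_apply
      (hasFDerivAt_const ((0 : Θ), (1 : ℝ)) θ)
    simpa using h4
  have hLHS : fderiv ℝ (fun θ' : Θ => C (v θ' 0)) θ h = f'' (h, 0) ((0 : Θ), (1 : ℝ)) := by
    rw [hL1, hLd.fderiv]
    simp
  -- RHS
  have hR1 : (fun β : ℝ => fderiv ℝ (fun θ' : Θ => E θ' (v θ β)) θ h)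
      = fun β : ℝ => Φ (θ, β) ((h : Θ), (0 : ℝ)) := by
    funext β
    have hA : HasFDerivAt (fun θ' : Θ => E θ' (v θ β))
        ((DE (θ, v θ β)).comp ((ContinuousLinearMap.id ℝ Θ).prod 0)) θ :=
      by exact ((hEd (θ, v θ β)).hasFDerivAt.comp (f := fun θ' : Θ => ((θ', v θ β) : Θ × V)) θ
        ((hasFDerivAt_id θ).prodMk (hasFDerivAt_const (v θ β) θ)))
    rw [hA.fderiv]
    simp [hΦdef, hjdef, hSdef, hFstdef]
  have hβ : HasDerivAt (fun β : ℝ => Φ (θ, β) ((h : Θ), (0 : ℝ)))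
      (f'' ((0 : Θ), (1 : ℝ)) (h, 0)) 0 := by
    have hι : HasDerivAt (fun β : ℝ => ((θ, β) : Θ × ℝ)) ((0 : Θ), (1 : ℝ)) 0 :=
      (hasDerivAt_const (0 : ℝ) θ).prodMk (hasDerivAt_id (0 : ℝ))
    have h5 := (hf''.comp_hasDerivAt 0 hι).clm_apply
      (hasDerivAt_const (0 : ℝ) ((h : Θ), (0 : ℝ)))
    simpa using h5
  rw [hLHS, hR1, hβ.deriv]
  exact hsym _ _



/-- Equilibrium propagation formula: with `E : Θ → V → ℝ` C², `C : V → ℝ` C¹,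
`v⋆ : Θ → ℝ → V` C¹ jointly, and the equilibrium condition
`∇_w (E θ w + β·C w) |_{w = v⋆ θ β} = 0` for all `θ, β`, the loss `L θ = C (v⋆ θ 0)` satisfies
`∂L/∂θ · h = d/dβ |_{β=0} (∂/∂θ E(θ, v⋆ θ β)) · h`. -/
theorem stmt11 {m n : ℕ}
    (E : EuclideanSpace ℝ (Fin m) → EuclideanSpace ℝ (Fin n) → ℝ)
    (hE : ContDiff ℝ 2
      (fun p : EuclideanSpace ℝ (Fin m) × EuclideanSpace ℝ (Fin n) => E p.1 p.2))
    (C : EuclideanSpace ℝ (Fin n) → ℝ) (hC : ContDiff ℝ 1 C)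
    (v : EuclideanSpace ℝ (Fin m) → ℝ → EuclideanSpace ℝ (Fin n))
    (hv : ContDiff ℝ 1 (fun p : EuclideanSpace ℝ (Fin m) × ℝ => v p.1 p.2))
    (heq : ∀ (θ : EuclideanSpace ℝ (Fin m)) (β : ℝ),
      gradient (fun w => E θ w + β * C w) (v θ β) = 0)
    (L : EuclideanSpace ℝ (Fin m) → ℝ)
    (hL : ∀ θ, L θ = C (v θ 0)) :
    ∀ (θ h : EuclideanSpace ℝ (Fin m)),
      fderiv ℝ L θ h = deriv (fun β : ℝ => fderiv ℝ (fun θ' => E θ' (v θ β)) θ h) 0 := by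
  intro θ h
  have hLfun : L = fun θ' => C (v θ' 0) := funext hL
  rw [hLfun]
  exact eqprop_aux E hE C hC v hv heq θ h
end

section
/- Let Θ = EuclideanSpace ℝ (Fin m) and V = EuclideanSpace ℝ (Fin n). Let E : Θ → V → ℝ be C³ on Θ × V, C : V → ℝ be C², and v⋆ : Θ → ℝ → V be C³ on Θ × ℝ, satisfying for all θ, β the equilibrium condition gradient (fun w => E θ w + β·C w) (v⋆ θ β) = 0. Let L θ = C (v⋆ θ 0), let ω > 0, T = 2π/ω, and for γ ∈ ℝ define b(γ) = (2/T)·∫₀ᵀ sin(ωt) • v⋆ θ (γ·sin(ωt)) dt ∈ V. Then for every fixed θ ∈ Θ and every direction h ∈ Θ, the function γ ↦ γ·(fderiv ℝ L θ h) − ⟪b(γ), fderiv ℝ (fun θ' => gradient (E θ') (v⋆ θ 0)) θ h⟫ is big-O of γ³ as γ → 0. -/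
open MeasureTheory
open scoped RealInnerProductSpace

lemma cubic_bound (φ : ℝ → ℝ) (hφ : ContDiff ℝ 3 φ) (h0 : φ 0 = 0)
    (h1 : deriv φ 0 = 0) (h2 : deriv (deriv φ) 0 = 0) :
    ∃ M : ℝ, ∀ β : ℝ, |β| ≤ 1 → |φ β| ≤ M * |β| ^ 3 := by
  have hφ1 : ContDiff ℝ 2 (deriv φ) := by
    have := (contDiff_succ_iff_deriv (n := 2)).mp (by exact_mod_cast hφ)
    exact this.2.2
  have hφ2 : ContDiff ℝ 1 (deriv (deriv φ)) := by
    have := (contDiff_succ_iff_deriv (n := 1)).mp (by exact_mod_cast hφ1)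
    exact this.2.2
  have hc3 : Continuous (deriv (deriv (deriv φ))) := hφ2.continuous_deriv le_rfl
  obtain ⟨K, hK⟩ := (isCompact_Icc (a := (-1:ℝ)) (b := 1)).exists_bound_of_continuousOn
    hc3.continuousOn
  have hK0 : 0 ≤ K := le_trans (norm_nonneg _) (hK 0 (by norm_num))
  refine ⟨K, fun β hβ => ?_⟩
  have hmem : ∀ t : ℝ, |t| ≤ |β| → t ∈ Set.Icc (-1:ℝ) 1 := fun t ht => by
    constructor <;> [linarith [neg_abs_le t, (ht.trans hβ)]; linarith [le_abs_self t, ht.trans hβ]]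
  -- step A : |φ'' t| ≤ K * |t| for |t| ≤ 1
  have stepA : ∀ t : ℝ, |t| ≤ 1 → |deriv (deriv φ) t| ≤ K * |t| := by
    intro t ht
    have := Convex.norm_image_sub_le_of_norm_deriv_le
      (f := deriv (deriv φ)) (s := Set.Icc (-1:ℝ) 1)
      (fun x _ => (hφ2.differentiable one_ne_zero) x) (fun x hx => hK x hx)
      (convex_Icc _ _) (x := 0) (y := t) (by norm_num) (by
        constructor <;> [linarith [neg_abs_le t]; linarith [le_abs_self t]])
    simpa [h2, Real.norm_eq_abs] using this
  -- step B : |φ' t| ≤ K * |t|^2 for |t| ≤ 1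
  have stepB : ∀ t : ℝ, |t| ≤ 1 → |deriv φ t| ≤ K * |t| ^ 2 := by
    intro t ht
    have := Convex.norm_image_sub_le_of_norm_deriv_le
      (f := deriv φ) (s := Set.uIcc (0:ℝ) t)
      (fun x _ => (hφ1.differentiable two_ne_zero) x)
      (fun x hx => by
        have hx' : |x| ≤ |t| := by
          rcases Set.mem_uIcc.mp hx with h' | h' <;> rw [abs_le] <;>
            constructor <;> nlinarith [le_abs_self t, neg_abs_le t]
        calc ‖deriv (deriv φ) x‖ ≤ K * |x| := stepA x (hx'.trans ht)
          _ ≤ K * |t| := mul_le_mul_of_nonneg_left hx' hK0)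
      (convex_uIcc _ _) Set.left_mem_uIcc Set.right_mem_uIcc
    have : |deriv φ t - deriv φ 0| ≤ K * |t| * |t - 0| := this
    rw [h1, sub_zero, sub_zero] at this
    calc |deriv φ t| ≤ K * |t| * |t| := this
      _ = K * |t| ^ 2 := by ring
  -- step C
  have := Convex.norm_image_sub_le_of_norm_deriv_le
    (f := φ) (s := Set.uIcc (0:ℝ) β)
    (fun x _ => (hφ.differentiable (by norm_num)) x)
    (fun x hx => by
      have hx' : |x| ≤ |β| := by
        rcases Set.mem_uIcc.mp hx with h' | h' <;> rw [abs_le] <;>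
          constructor <;> nlinarith [le_abs_self β, neg_abs_le β]
      calc ‖deriv φ x‖ ≤ K * |x| ^ 2 := stepB x (hx'.trans hβ)
        _ ≤ K * |β| ^ 2 := mul_le_mul_of_nonneg_left (pow_le_pow_left₀ (abs_nonneg x) hx' 2) hK0)
    (convex_uIcc _ _) Set.left_mem_uIcc Set.right_mem_uIcc
  have h' : |φ β - φ 0| ≤ K * |β| ^ 2 * |β - 0| := this
  rw [h0, sub_zero, sub_zero] at h'
  calc |φ β| ≤ K * |β| ^ 2 * |β| := h'
    _ = K * |β| ^ 3 := by ring

lemma sin_pow_int (ω : ℝ) (hω : 0 < ω) (k : ℕ) :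
    ∫ t in (0:ℝ)..(2 * Real.pi / ω), Real.sin (ω * t) ^ k
      = ω⁻¹ * ∫ x in (0:ℝ)..(2 * Real.pi), Real.sin x ^ k := by
  have h := intervalIntegral.integral_comp_mul_left (a := 0) (b := 2 * Real.pi / ω)
    (fun x => Real.sin x ^ k) (ne_of_gt hω)
  rw [h, mul_zero, mul_div_cancel₀ _ (ne_of_gt hω), smul_eq_mul]

lemma sin1_int (ω : ℝ) (hω : 0 < ω) :
    ∫ t in (0:ℝ)..(2 * Real.pi / ω), Real.sin (ω * t) = 0 := by
  have := sin_pow_int ω hω 1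
  simp only [pow_one] at this
  rw [this, integral_sin]
  simp [Real.cos_two_pi]

lemma sin2_int (ω : ℝ) (hω : 0 < ω) :
    ∫ t in (0:ℝ)..(2 * Real.pi / ω), Real.sin (ω * t) ^ 2 = Real.pi / ω := by
  rw [sin_pow_int ω hω 2, integral_sin_sq]
  simp [Real.sin_two_pi, Real.cos_two_pi]
  ring

lemma sin3_int (ω : ℝ) (hω : 0 < ω) :
    ∫ t in (0:ℝ)..(2 * Real.pi / ω), Real.sin (ω * t) ^ 3 = 0 := by
  rw [sin_pow_int ω hω 3]
  have h := integral_sin_pow (a := 0) (b := 2 * Real.pi) 1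
  norm_num [Real.sin_two_pi, integral_sin, Real.cos_two_pi] at h
  norm_num [h]

-- gradient of f + β·g
lemma gradient_add_smul {n : ℕ} (f g : EuclideanSpace ℝ (Fin n) → ℝ)
    (x : EuclideanSpace ℝ (Fin n)) (β : ℝ)
    (hf : DifferentiableAt ℝ f x) (hg : DifferentiableAt ℝ g x) :
    gradient (fun w => f w + β * g w) x = gradient f x + β • gradient g x := by
  unfold gradient
  rw [show fderiv ℝ (fun w => f w + β * g w) x = fderiv ℝ f x + β • fderiv ℝ g x by
    rw [fderiv_fun_add hf (hg.const_mul β), fderiv_const_mul hg], map_add, LinearIsometryEquiv.map_smul]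

lemma key_identity {m n : ℕ}
    (E : EuclideanSpace ℝ (Fin m) → EuclideanSpace ℝ (Fin n) → ℝ)
    (hE : ContDiff ℝ 3
      (fun p : EuclideanSpace ℝ (Fin m) × EuclideanSpace ℝ (Fin n) => E p.1 p.2))
    (C : EuclideanSpace ℝ (Fin n) → ℝ) (hC : ContDiff ℝ 2 C)
    (v : EuclideanSpace ℝ (Fin m) → ℝ → EuclideanSpace ℝ (Fin n))
    (hv : ContDiff ℝ 3 (fun p : EuclideanSpace ℝ (Fin m) × ℝ => v p.1 p.2))
    (heq : ∀ (θ : EuclideanSpace ℝ (Fin m)) (β : ℝ),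
      gradient (fun w => E θ w + β * C w) (v θ β) = 0)
    (L : EuclideanSpace ℝ (Fin m) → ℝ) (hL : ∀ θ, L θ = C (v θ 0))
    (θ : EuclideanSpace ℝ (Fin m)) (h : EuclideanSpace ℝ (Fin m)) :
    fderiv ℝ L θ h =
      ⟪deriv (fun β => v θ β) 0,
        fderiv ℝ (fun θ' => gradient (E θ') (v θ 0)) θ h⟫ := by
  classical
  let Θ := EuclideanSpace ℝ (Fin m)
  let V := EuclideanSpace ℝ (Fin n)
  have hEdiff : Differentiable ℝ (fun p : Θ × V => E p.1 p.2) :=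
    hE.differentiable (by norm_num)
  have hCdiff : Differentiable ℝ C := hC.differentiable two_ne_zero
  have hvdiff : Differentiable ℝ (fun p : Θ × ℝ => v p.1 p.2) :=
    hv.differentiable (by norm_num)
  -- each E θ' is differentiable
  have hEθ : ∀ (θ' : Θ), Differentiable ℝ (E θ') := by
    intro θ' w
    exact (hEdiff (θ', w)).comp w ((differentiableAt_const θ').prodMk differentiableAt_id)
  -- G := joint gradient map
  set G : Θ × V → V := fun p => gradient (E p.1) p.2 with hGdef
  -- G is C²
  have hG : ContDiff ℝ 2 G := by
    have hfd : ∀ p : Θ × V, fderiv ℝ (E p.1) p.2 =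
        (fderiv ℝ (fun q : Θ × V => E q.1 q.2) p).comp
          (ContinuousLinearMap.inr ℝ Θ V) := by
      intro p
      have h1 : HasFDerivAt (fun w : V => (p.1, w))
          (ContinuousLinearMap.inr ℝ Θ V) p.2 :=
        (hasFDerivAt_const p.1 p.2).prodMk (hasFDerivAt_id p.2)
      have h2 := ((hEdiff p).hasFDerivAt.comp p.2 h1)
      exact h2.fderiv
    have hfd2 : ContDiff ℝ 2 (fun p : Θ × V => fderiv ℝ (E p.1) p.2) := by
      have : ContDiff ℝ 2 (fun p : Θ × V =>
          (fderiv ℝ (fun q : Θ × V => E q.1 q.2) p).comp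
            (ContinuousLinearMap.inr ℝ Θ V)) := by
        apply ContDiff.clm_comp
        · exact hE.fderiv_right (m := 2) (by norm_num)
        · exact contDiff_const
      rw [show (fun p : Θ × V => fderiv ℝ (E p.1) p.2)
        = (fun p : Θ × V => (fderiv ℝ (fun q : Θ × V => E q.1 q.2) p).comp
          (ContinuousLinearMap.inr ℝ Θ V)) from funext hfd]
      exact this
    exact ((InnerProductSpace.toDual ℝ V).symm.contDiff).comp hfd2
  -- equilibrium in G-form
  have heq' : ∀ (θ' : Θ) (β : ℝ), G (θ', v θ' β) = -β • gradient C (v θ' β) := by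
    intro θ' β
    have := heq θ' β
    rw [gradient_add_smul (E θ') C (v θ' β) β (hEθ θ' _) (hCdiff.differentiableAt)] at this
    have : gradient (E θ') (v θ' β) = -(β • gradient C (v θ' β)) := by
      rwa [← eq_neg_iff_add_eq_zero] at this
    simpa [hGdef, neg_smul] using this
  -- notation
  set v0 : V := v θ 0 with hv0
  set DG : (Θ × V) →L[ℝ] V := fderiv ℝ G (θ, v0) with hDG
  have hGdiff : Differentiable ℝ G := hG.differentiable two_ne_zero
  -- derivative of θ' ↦ v θ' 0
  have hvθdiff : Differentiable ℝ (fun θ' : Θ => v θ' 0) := fun x =>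
    (hvdiff (x, (0:ℝ))).comp (f := fun θ' : Θ => (θ', (0:ℝ))) x (differentiableAt_id.prodMk (differentiableAt_const (0:ℝ)))
  set Dθv : Θ →L[ℝ] V := fderiv ℝ (fun θ' : Θ => v θ' 0) θ with hDθv
  have hvβdiff : Differentiable ℝ (fun β : ℝ => v θ β) := fun x =>
    (hvdiff (θ, x)).comp x ((differentiableAt_const θ).prodMk differentiableAt_id)
  set vβ' : V := deriv (fun β : ℝ => v θ β) 0 with hvβ'
  -- (I) : DG (0, vβ') = - gradient C v0
  have hI : DG (0, vβ') = -gradient C v0 := by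
    have hinner : HasDerivAt (fun β : ℝ => ((θ, v θ β) : Θ × V)) ((0 : Θ), vβ') 0 :=
      (hasDerivAt_const (0:ℝ) θ).prodMk ((hvβdiff 0).hasDerivAt)
    have hlhs : HasDerivAt (fun β : ℝ => G (θ, v θ β)) (DG ((0 : Θ), vβ')) 0 :=
      (hGdiff _).hasFDerivAt.comp_hasDerivAt 0 hinner
    have hrhs : HasDerivAt (fun β : ℝ => -β • gradient C (v θ β))
        (-gradient C v0) 0 := by
      have hgradC : Differentiable ℝ (gradient C) := by
        have : ContDiff ℝ 1 (gradient C) := by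
          have h1 : ContDiff ℝ 1 (fderiv ℝ C) := hC.fderiv_right (m := 1) (by norm_num)
          exact ((InnerProductSpace.toDual ℝ V).symm.contDiff).comp h1
        exact this.differentiable one_ne_zero
      have hf : HasDerivAt (fun β : ℝ => gradient C (v θ β))
          (deriv (fun β : ℝ => gradient C (v θ β)) 0) 0 :=
        ((hgradC.comp hvβdiff) 0).hasDerivAt
      have hc : HasDerivAt (fun β : ℝ => -β) (-1 : ℝ) 0 := by
        exact hasDerivAt_neg (0:ℝ)
      have := hc.fun_smul hf
      simpa using this
    have heqfun : (fun β : ℝ => G (θ, v θ β)) = fun β : ℝ => -β • gradient C (v θ β) :=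
      funext fun β => heq' θ β
    rw [heqfun] at hlhs
    exact hlhs.unique hrhs
  -- (II) : ∀ x, DG (x, Dθv x) = 0
  have hII : ∀ x : Θ, DG (x, Dθv x) = 0 := by
    intro x
    have hinner : HasFDerivAt (fun θ' : Θ => ((θ', v θ' 0) : Θ × V))
        ((ContinuousLinearMap.id ℝ Θ).prod Dθv) θ :=
      (hasFDerivAt_id θ).prodMk ((hvθdiff θ).hasFDerivAt)
    have hlhs : HasFDerivAt (fun θ' : Θ => G (θ', v θ' 0))
        (DG.comp ((ContinuousLinearMap.id ℝ Θ).prod Dθv)) θ :=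
      (hGdiff _).hasFDerivAt.comp θ hinner
    have heqfun : (fun θ' : Θ => G (θ', v θ' 0)) = fun _ : Θ => (0 : V) := by
      funext θ'
      simpa using heq' θ' 0
    rw [heqfun] at hlhs
    have : DG.comp ((ContinuousLinearMap.id ℝ Θ).prod Dθv) = 0 :=
      hlhs.unique (hasFDerivAt_const 0 θ)
    calc DG (x, Dθv x) = (DG.comp ((ContinuousLinearMap.id ℝ Θ).prod Dθv)) x := rfl
      _ = 0 := by rw [this]; rfl
  -- the direction A
  set A : V := fderiv ℝ (fun θ' : Θ => gradient (E θ') v0) θ h with hA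
  have hA' : A = DG (h, 0) := by
    have hinner : HasFDerivAt (fun θ' : Θ => ((θ', v0) : Θ × V))
        ((ContinuousLinearMap.id ℝ Θ).prod 0) θ :=
      (hasFDerivAt_id θ).prodMk (hasFDerivAt_const v0 θ)
    have hlhs : HasFDerivAt (fun θ' : Θ => G (θ', v0))
        (DG.comp ((ContinuousLinearMap.id ℝ Θ).prod 0)) θ :=
      (hGdiff _).hasFDerivAt.comp θ hinner
    have : fderiv ℝ (fun θ' : Θ => G (θ', v0)) θ
        = DG.comp ((ContinuousLinearMap.id ℝ Θ).prod 0) := hlhs.fderiv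
    rw [hA, show (fun θ' : Θ => gradient (E θ') v0) = (fun θ' : Θ => G (θ', v0)) from rfl,
      this]
    rfl
  -- A = - DG (0, Dθv h)
  have hA'' : A = -DG (0, Dθv h) := by
    have h1 : DG (h, Dθv h) = DG (h, 0) + DG (0, Dθv h) := by
      rw [← map_add]
      norm_num
    have := hII h
    rw [h1] at this
    rw [hA']
    linear_combination (norm := module) this
  -- symmetry of the Hessian part
  have hsymDG : ∀ x y : V, ⟪DG (0, x), y⟫ = ⟪x, DG (0, y)⟫ := by
    -- partial derivative of G in w at (θ, v0)
    have hpartial : ∀ x : V, DG (0, x)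
        = fderiv ℝ (fun w : V => G (θ, w)) v0 x := by
      intro x
      have hinner : HasFDerivAt (fun w : V => ((θ, w) : Θ × V))
          ((0 : V →L[ℝ] Θ).prod (ContinuousLinearMap.id ℝ V)) v0 :=
        (hasFDerivAt_const θ v0).prodMk (hasFDerivAt_id v0)
      have hlhs : HasFDerivAt (fun w : V => G (θ, w))
          (DG.comp ((0 : V →L[ℝ] Θ).prod (ContinuousLinearMap.id ℝ V))) v0 :=
        (hGdiff _).hasFDerivAt.comp v0 hinner
      rw [hlhs.fderiv]
      rfl
    -- identify with second derivative of E θ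
    have hEθ3 : ContDiff ℝ 3 (E θ) :=
      hE.comp (contDiff_const.prodMk contDiff_id)
    have hfE1 : ContDiff ℝ 2 (fderiv ℝ (E θ)) := hEθ3.fderiv_right (m := 2) (by norm_num)
    have hGfun : (fun w : V => G (θ, w))
        = (⇑(InnerProductSpace.toDual ℝ V).symm) ∘ (fderiv ℝ (E θ)) := rfl
    have hfd2 : fderiv ℝ (fun w : V => G (θ, w)) v0
        = ((InnerProductSpace.toDual ℝ V).symm.toLinearIsometry.toContinuousLinearMap).comp
            (fderiv ℝ (fderiv ℝ (E θ)) v0) := by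
      rw [hGfun]
      exact (InnerProductSpace.toDual ℝ V).symm.comp_fderiv
    have hsym : IsSymmSndFDerivAt ℝ (E θ) v0 :=
      hEθ3.contDiffAt.isSymmSndFDerivAt (by norm_num)
    intro x y
    have hx : DG (0, x) = (InnerProductSpace.toDual ℝ V).symm
        (fderiv ℝ (fderiv ℝ (E θ)) v0 x) := by
      rw [hpartial x, hfd2]; rfl
    have hy : DG (0, y) = (InnerProductSpace.toDual ℝ V).symm
        (fderiv ℝ (fderiv ℝ (E θ)) v0 y) := by
      rw [hpartial y, hfd2]; rfl
    rw [hx, hy, InnerProductSpace.toDual_symm_apply]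
    rw [real_inner_comm]
    rw [InnerProductSpace.toDual_symm_apply]
    exact hsym x y
  -- (III) derivative of the loss
  have hIII : fderiv ℝ L θ h = ⟪gradient C v0, Dθv h⟫ := by
    have hLfun : L = fun θ' : Θ => C (v θ' 0) := funext hL
    have hfd : HasFDerivAt L ((fderiv ℝ C v0).comp Dθv) θ := by
      rw [hLfun]
      exact (hCdiff v0).hasFDerivAt.comp θ (hvθdiff θ).hasFDerivAt
    rw [hfd.fderiv]
    have : gradient C v0 = (InnerProductSpace.toDual ℝ V).symm (fderiv ℝ C v0) := rfl
    rw [this, InnerProductSpace.toDual_symm_apply]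
    rfl
  -- conclude
  have hgradC : gradient C v0 = -DG (0, vβ') := by
    rw [hI]; module
  rw [hIII, hgradC, hA'']
  rw [inner_neg_left, hsymDG vβ' (Dθv h), ← inner_neg_right]

/-- with `E` C³, `C` C², `v⋆` C³ jointly, equilibrium condition
`∇_w (E θ w + β·C w) |_{w = v⋆ θ β} = 0`, loss `L θ = C (v⋆ θ 0)`, `ω > 0`, `T = 2π/ω` and
`b(γ) = (2/T)·∫₀ᵀ sin(ωt) • v⋆ θ (γ sin(ωt)) dt`, for fixed `θ` and direction `h`:
`γ·(∂L/∂θ · h) − ⟪b(γ), ∂/∂θ [∇_w E(θ', ·) at v⋆ θ 0] · h⟫ = O(γ³)` as `γ → 0`. -/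
theorem stmt12 {m n : ℕ}
    (E : EuclideanSpace ℝ (Fin m) → EuclideanSpace ℝ (Fin n) → ℝ)
    (hE : ContDiff ℝ 3
      (fun p : EuclideanSpace ℝ (Fin m) × EuclideanSpace ℝ (Fin n) => E p.1 p.2))
    (C : EuclideanSpace ℝ (Fin n) → ℝ) (hC : ContDiff ℝ 2 C)
    (v : EuclideanSpace ℝ (Fin m) → ℝ → EuclideanSpace ℝ (Fin n))
    (hv : ContDiff ℝ 3 (fun p : EuclideanSpace ℝ (Fin m) × ℝ => v p.1 p.2))
    (heq : ∀ (θ : EuclideanSpace ℝ (Fin m)) (β : ℝ),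
      gradient (fun w => E θ w + β * C w) (v θ β) = 0)
    (L : EuclideanSpace ℝ (Fin m) → ℝ) (hL : ∀ θ, L θ = C (v θ 0))
    (ω T : ℝ) (hω : 0 < ω) (hT : T = 2 * Real.pi / ω)
    (θ : EuclideanSpace ℝ (Fin m))
    (b : ℝ → EuclideanSpace ℝ (Fin n))
    (hb : ∀ γ : ℝ,
      b γ = (2 / T) • ∫ t in (0 : ℝ)..T, Real.sin (ω * t) • v θ (γ * Real.sin (ω * t)))
    (h : EuclideanSpace ℝ (Fin m)) :
    Asymptotics.IsBigO (nhds (0 : ℝ))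
      (fun γ : ℝ =>
        γ * fderiv ℝ L θ h -
          ⟪b γ, fderiv ℝ (fun θ' => gradient (E θ') (v θ 0)) θ h⟫)
      (fun γ : ℝ => γ ^ 3) := by
  classical
  have hTpos : 0 < T := by
    rw [hT]; positivity
  set dLh : ℝ := fderiv ℝ L θ h with hdLh
  set A : EuclideanSpace ℝ (Fin n) :=
    fderiv ℝ (fun θ' => gradient (E θ') (v θ 0)) θ h with hA
  set vβ' : EuclideanSpace ℝ (Fin n) := deriv (fun β => v θ β) 0 with hvβ'
  have key : dLh = ⟪vβ', A⟫ := key_identity E hE C hC v hv heq L hL θ h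
  -- the scalar function g
  set g : ℝ → ℝ := fun β => β * dLh - ⟪v θ β, A⟫ with hg
  have hvβ3 : ContDiff ℝ 3 (fun β : ℝ => v θ β) :=
    hv.comp (contDiff_const.prodMk contDiff_id)
  have hg3 : ContDiff ℝ 3 g :=
    (contDiff_id.mul contDiff_const).sub (hvβ3.inner ℝ contDiff_const)
  have hgdiff : Differentiable ℝ g := hg3.differentiable (by norm_num)
  -- deriv g 0 = 0
  have hg'0 : deriv g 0 = 0 := by
    have h1 : HasDerivAt (fun β : ℝ => β * dLh) dLh 0 := by
      simpa using (hasDerivAt_id (0:ℝ)).mul_const dLh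
    have h2 : HasDerivAt (fun β : ℝ => ⟪v θ β, A⟫) ⟪vβ', A⟫ 0 := by
      have hd : HasDerivAt (fun β : ℝ => v θ β) vβ' 0 :=
        (hvβ3.differentiable (by norm_num) 0).hasDerivAt
      have := hd.inner ℝ (hasDerivAt_const (0:ℝ) A)
      simpa using this
    have := (h1.sub h2).deriv
    rw [show g = (fun β : ℝ => β * dLh) - fun β : ℝ => ⟪v θ β, A⟫ from rfl, this, key]
    ring
  set c : ℝ := deriv (deriv g) 0 with hc
  set φ : ℝ → ℝ := fun β => g β - g 0 - c / 2 * β ^ 2 with hφ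
  have hφ3 : ContDiff ℝ 3 φ := by
    apply ContDiff.sub
    · exact hg3.sub contDiff_const
    · exact contDiff_const.mul (contDiff_id.pow 2)
  have hφd : ∀ β : ℝ, HasDerivAt φ (deriv g β - c * β) β := by
    intro β
    have h1 : HasDerivAt (fun β : ℝ => g β - g 0) (deriv g β) β :=
      ((hgdiff β).hasDerivAt).sub_const (g 0)
    have h2 : HasDerivAt (fun β : ℝ => c / 2 * β ^ 2) (c * β) β := by
      have := (hasDerivAt_pow 2 β).const_mul (c / 2)
      exact this.congr_deriv (by norm_num; ring)
    exact h1.sub h2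
  have hφ0 : φ 0 = 0 := by simp [hφ]
  have hφ1 : deriv φ 0 = 0 := by
    rw [(hφd 0).deriv, hg'0]; ring
  have hφ2 : deriv (deriv φ) 0 = 0 := by
    have hderivφ : deriv φ = fun β => deriv g β - c * β := funext fun β => (hφd β).deriv
    rw [hderivφ]
    have hg2 : ContDiff ℝ 2 (deriv g) := by
      have := (contDiff_succ_iff_deriv (n := 2)).mp (by exact_mod_cast hg3)
      exact this.2.2
    have h1 : HasDerivAt (fun β : ℝ => deriv g β - c * β) (deriv (deriv g) 0 - c) 0 := by
      have ha : HasDerivAt (fun β : ℝ => deriv g β) (deriv (deriv g) 0) 0 :=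
        (hg2.differentiable two_ne_zero 0).hasDerivAt
      have hb' : HasDerivAt (fun β : ℝ => c * β) c 0 := by
        simpa using (hasDerivAt_id (0:ℝ)).const_mul c
      exact ha.sub hb'
    rw [h1.deriv, hc]
    ring
  obtain ⟨M₀, hM₀⟩ := cubic_bound φ hφ3 hφ0 hφ1 hφ2
  set M : ℝ := max M₀ 0 with hMdef
  have hM : ∀ β : ℝ, |β| ≤ 1 → |φ β| ≤ M * |β| ^ 3 := fun β hβ =>
    (hM₀ β hβ).trans (mul_le_mul_of_nonneg_right (le_max_left _ _) (by positivity))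
  have hMpos : 0 ≤ M := le_max_right _ _
  -- continuity facts
  have hsin_cont : Continuous fun t : ℝ => Real.sin (ω * t) :=
    Real.continuous_sin.comp (continuous_const.mul continuous_id)
  have hφcont : Continuous φ := hφ3.continuous
  have hvγ_cont : ∀ γ : ℝ, Continuous fun t : ℝ => v θ (γ * Real.sin (ω * t)) := by
    intro γ
    exact hv.continuous.comp (continuous_const.prodMk (continuous_const.mul hsin_cont))
  -- the integral representation
  have hrepr : ∀ γ : ℝ, γ * dLh - ⟪b γ, A⟫
      = (2 / T) * ∫ t in (0:ℝ)..T, Real.sin (ω * t) * φ (γ * Real.sin (ω * t)) := by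
    intro γ
    have hint1 : IntervalIntegrable
        (fun t : ℝ => Real.sin (ω * t) • v θ (γ * Real.sin (ω * t))) volume 0 T :=
      (hsin_cont.smul (hvγ_cont γ)).intervalIntegrable 0 T
    -- inner product with the integral
    have step1 : ⟪b γ, A⟫
        = (2 / T) * ∫ t in (0:ℝ)..T,
            Real.sin (ω * t) * ⟪v θ (γ * Real.sin (ω * t)), A⟫ := by
      rw [hb γ, real_inner_smul_left, real_inner_comm]
      congr 1
      have h2 := (innerSL ℝ A).intervalIntegral_comp_comm hint1
      calc (inner ℝ A (∫ (t:ℝ) in (0:ℝ)..T, Real.sin (ω*t) • v θ (γ * Real.sin (ω*t))) : ℝ)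
          = (innerSL ℝ A) (∫ (t:ℝ) in (0:ℝ)..T, Real.sin (ω*t) • v θ (γ * Real.sin (ω*t))) := rfl
        _ = ∫ t in (0:ℝ)..T, (innerSL ℝ A) (Real.sin (ω*t) • v θ (γ * Real.sin (ω*t))) := h2.symm
        _ = ∫ t in (0:ℝ)..T, Real.sin (ω*t) * inner ℝ (v θ (γ*Real.sin (ω*t))) A := by
            congr 1
            funext t
            simp only [innerSL_apply_apply, inner_smul_right]
            rw [real_inner_comm]
    -- sin squared integral
    have hsin2 : ∫ t in (0:ℝ)..T, Real.sin (ω * t) ^ 2 = T / 2 := by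
      rw [hT, sin2_int ω hω]
      field_simp
    have step2 : γ * dLh
        = (2 / T) * ∫ t in (0:ℝ)..T,
            Real.sin (ω * t) * (γ * Real.sin (ω * t) * dLh) := by
      have : (fun t : ℝ => Real.sin (ω * t) * (γ * Real.sin (ω * t) * dLh))
          = fun t : ℝ => (γ * dLh) * Real.sin (ω * t) ^ 2 := by
        funext t; ring
      rw [this, intervalIntegral.integral_const_mul, hsin2]
      field_simp
    -- combine into g
    have hintg1 : IntervalIntegrable
        (fun t : ℝ => Real.sin (ω * t) * (γ * Real.sin (ω * t) * dLh)) volume 0 T := by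
      apply Continuous.intervalIntegrable
      exact hsin_cont.mul ((continuous_const.mul hsin_cont).mul continuous_const)
    have hintg2 : IntervalIntegrable
        (fun t : ℝ => Real.sin (ω * t) * ⟪v θ (γ * Real.sin (ω * t)), A⟫) volume 0 T := by
      apply Continuous.intervalIntegrable
      exact hsin_cont.mul ((hvγ_cont γ).inner continuous_const)
    have step3 : γ * dLh - ⟪b γ, A⟫
        = (2 / T) * ∫ t in (0:ℝ)..T, Real.sin (ω * t) * g (γ * Real.sin (ω * t)) := by
      rw [step1, step2, ← mul_sub, ← intervalIntegral.integral_sub hintg1 hintg2]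
      congr 1
      apply intervalIntegral.integral_congr
      intro t _
      simp only [hg]
      ring
    -- expand g in terms of φ
    have hptw : (fun t : ℝ => Real.sin (ω * t) * g (γ * Real.sin (ω * t)))
        = fun t : ℝ => Real.sin (ω * t) * φ (γ * Real.sin (ω * t))
            + (g 0 * Real.sin (ω * t)
            + (c / 2 * γ ^ 2) * Real.sin (ω * t) ^ 3) := by
      funext t
      have : g (γ * Real.sin (ω * t)) = φ (γ * Real.sin (ω * t)) + g 0
          + c / 2 * (γ * Real.sin (ω * t)) ^ 2 := by
        simp only [hφ]; ring
      rw [this]; ring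
    have hintφ : IntervalIntegrable
        (fun t : ℝ => Real.sin (ω * t) * φ (γ * Real.sin (ω * t))) volume 0 T := by
      apply Continuous.intervalIntegrable
      exact hsin_cont.mul (hφcont.comp (continuous_const.mul hsin_cont))
    have hintrest : IntervalIntegrable
        (fun t : ℝ => g 0 * Real.sin (ω * t)
          + (c / 2 * γ ^ 2) * Real.sin (ω * t) ^ 3) volume 0 T := by
      apply Continuous.intervalIntegrable
      exact (continuous_const.mul hsin_cont).add (continuous_const.mul (hsin_cont.pow 3))
    rw [step3, hptw, intervalIntegral.integral_add hintφ hintrest,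
      intervalIntegral.integral_add (f := fun t : ℝ => g 0 * Real.sin (ω * t))
        (g := fun t : ℝ => (c / 2 * γ ^ 2) * Real.sin (ω * t) ^ 3)
        ((continuous_const.mul hsin_cont).intervalIntegrable 0 T)
        ((continuous_const.mul (hsin_cont.pow 3)).intervalIntegrable 0 T),
      intervalIntegral.integral_const_mul, intervalIntegral.integral_const_mul]
    rw [hT, sin1_int ω hω, sin3_int ω hω]
    ring
  -- final bound
  rw [Asymptotics.isBigO_iff]
  refine ⟨2 * M, ?_⟩
  have hev : ∀ᶠ γ : ℝ in nhds 0, |γ| ≤ 1 := by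
    filter_upwards [Metric.ball_mem_nhds (0:ℝ) one_pos] with γ hγ
    rw [Metric.mem_ball, Real.dist_eq, sub_zero] at hγ
    exact le_of_lt hγ
  filter_upwards [hev] with γ hγ
  rw [hrepr γ]
  have hbound : ‖∫ t in (0:ℝ)..T, Real.sin (ω * t) * φ (γ * Real.sin (ω * t))‖
      ≤ (M * |γ| ^ 3) * |T - 0| := by
    apply intervalIntegral.norm_integral_le_of_norm_le_const
    intro x _
    rw [Real.norm_eq_abs, abs_mul]
    have h1 : |Real.sin (ω * x)| ≤ 1 := Real.abs_sin_le_one _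
    have h2 : |γ * Real.sin (ω * x)| ≤ 1 := by
      rw [abs_mul]
      exact mul_le_one₀ hγ (abs_nonneg _) h1
    have h3 : |φ (γ * Real.sin (ω * x))| ≤ M * |γ * Real.sin (ω * x)| ^ 3 := hM _ h2
    have h4 : M * |γ * Real.sin (ω * x)| ^ 3 ≤ M * |γ| ^ 3 := by
      apply mul_le_mul_of_nonneg_left _ hMpos
      rw [abs_mul, mul_pow]
      calc |γ| ^ 3 * |Real.sin (ω * x)| ^ 3 ≤ |γ| ^ 3 * 1 := by
            apply mul_le_mul_of_nonneg_left _ (by positivity)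
            simpa using pow_le_pow_left₀ (abs_nonneg (Real.sin (ω * x))) h1 3
        _ = |γ| ^ 3 := mul_one _
    calc |Real.sin (ω * x)| * |φ (γ * Real.sin (ω * x))|
        ≤ 1 * (M * |γ| ^ 3) := by
          apply mul_le_mul h1 (h3.trans h4) (abs_nonneg _) one_pos.le
      _ = M * |γ| ^ 3 := one_mul _
  rw [Real.norm_eq_abs, abs_mul]
  calc |2 / T| * |∫ t in (0:ℝ)..T, Real.sin (ω * t) * φ (γ * Real.sin (ω * t))|
      ≤ (2 / T) * ((M * |γ| ^ 3) * |T - 0|) := by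
        apply mul_le_mul_of_nonneg_left hbound ?_ |>.trans_eq' ?_
        · positivity
        · rw [abs_of_pos (by positivity : (0:ℝ) < 2 / T), Real.norm_eq_abs]
    _ = 2 * M * |γ| ^ 3 := by
        rw [sub_zero, abs_of_pos hTpos]
        field_simp
    _ = 2 * M * ‖γ ^ 3‖ := by rw [Real.norm_eq_abs, abs_pow]
end

section
/- (Frequency propagation performs gradient descent in resistive networks.) Let V = EuclideanSpace ℝ (Fin N), let S be a finite set of ordered pairs (j,k) of nodes in Fin N, let x : Fin N → ℝ, let E_nl : V → ℝ be C³, let C : V → ℝ be C², and for conductances θ : S → ℝ define the energy E θ v = E_nl v + (1/2)·Σ_{(j,k)∈S} θ (j,k)·(v j − v k)² + Σ_j x j · v j. Let v⋆ : (S → ℝ) → ℝ → V be C³ jointly, satisfying for all θ and β the equilibrium condition gradient (fun w => E θ w + β·C w) (v⋆ θ β) = 0. Let L θ = C (v⋆ θ 0), let ω > 0, T = 2π/ω, and for γ ∈ ℝ define a(γ) = (1/T)·∫₀ᵀ v⋆ θ (γ·sin(ωt)) dt and b(γ) = (2/T)·∫₀ᵀ sin(ωt) • v⋆ θ (γ·sin(ωt))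 dt. Then for every fixed θ and every edge (j,k) ∈ S, the function γ ↦ (a(γ) j − a(γ) k)·(b(γ) j − b(γ) k) − γ·(fderiv ℝ L θ (δ_{(j,k)})) is big-O of γ³ as γ → 0, where δ_{(j,k)} : S → ℝ is the indicator of the edge (j,k). -/
open MeasureTheory

set_option maxHeartbeats 1000000


private lemma cubic_taylor_bound {V : Type*} [NormedAddCommGroup V] [NormedSpace ℝ V]
    {u : ℝ → V} (hu : ContDiff ℝ 3 u) :
    ∃ M : ℝ, 0 ≤ M ∧ ∀ s : ℝ, |s| ≤ 1 →
      ‖u s - u 0 - s • deriv u 0 - (s ^ 2 / 2) • deriv (deriv u) 0‖ ≤ M * |s| ^ 3 := by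
  have h3 : ContDiff ℝ (2+1) u := by exact_mod_cast hu
  rw [contDiff_succ_iff_deriv] at h3
  have hud : Differentiable ℝ u := h3.1
  have h2 : ContDiff ℝ (1+1) (deriv u) := by exact_mod_cast h3.2.2
  rw [contDiff_succ_iff_deriv] at h2
  have hd1d : Differentiable ℝ (deriv u) := h2.1
  have h1 : ContDiff ℝ (0+1) (deriv (deriv u)) := by exact_mod_cast h2.2.2
  rw [contDiff_succ_iff_deriv] at h1
  have hd2d : Differentiable ℝ (deriv (deriv u)) := h1.1
  have hd3c : Continuous (deriv (deriv (deriv u))) := h1.2.2.continuous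
  obtain ⟨K, hK⟩ := (isCompact_Icc (a := (-1:ℝ)) (b := 1)).exists_bound_of_continuousOn
    hd3c.continuousOn
  have hK0 : 0 ≤ K := le_trans (norm_nonneg _) (hK 0 (by norm_num))
  set d1 := deriv u with hd1
  set d2 := deriv (deriv u) with hd2def
  set g2 : ℝ → V := fun s => d2 s - d2 0 with hg2
  set g1 : ℝ → V := fun s => d1 s - d1 0 - s • d2 0 with hg1
  set g0 : ℝ → V := fun s => u s - u 0 - s • d1 0 - (s ^ 2 / 2) • d2 0 with hg0
  have hg1deriv : ∀ y : ℝ, HasDerivAt g1 (g2 y) y := by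
    intro y
    have : HasDerivAt (fun y : ℝ => y • d2 0) ((1:ℝ) • d2 0) y :=
      (hasDerivAt_id y).smul_const _
    simpa [hg1, hg2, one_smul] using (((hd1d y).hasDerivAt).sub_const (d1 0)).fun_sub this
  have hg0deriv : ∀ y : ℝ, HasDerivAt g0 (g1 y) y := by
    intro y
    have h' : HasDerivAt (fun y : ℝ => (y ^ 2 / 2) • d2 0)
        (((2 * y ^ 1) / 2) • d2 0) y :=
      (((hasDerivAt_pow 2 y)).div_const 2).smul_const _
    have h'' : HasDerivAt (fun y : ℝ => (y ^ 2 / 2) • d2 0) (y • d2 0) y := by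
      convert h' using 2; ring
    simpa [hg0, hg1] using ((((hud y).hasDerivAt).sub_const (u 0)).fun_sub
      ((hasDerivAt_id y).smul_const (d1 0))).fun_sub h''
  have b2 : ∀ s : ℝ, |s| ≤ 1 → ‖g2 s‖ ≤ K * |s| := by
    intro s hs
    have hmem : s ∈ Set.Icc (-1:ℝ) 1 := Set.mem_Icc.2 ⟨(abs_le.1 hs).1, (abs_le.1 hs).2⟩
    have h0mem : (0:ℝ) ∈ Set.Icc (-1:ℝ) 1 := by norm_num
    have := Convex.norm_image_sub_le_of_norm_hasDerivWithin_le
      (f := d2) (f' := deriv d2) (s := Set.Icc (-1:ℝ) 1) (x := (0:ℝ)) (y := s)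
      (fun x _ => ((hd2d x).hasDerivAt).hasDerivWithinAt)
      (fun x hx => hK x hx) (convex_Icc _ _) h0mem hmem
    simpa [hg2, Real.norm_eq_abs] using this
  have b1 : ∀ s : ℝ, |s| ≤ 1 → ‖g1 s‖ ≤ K * |s| ^ 2 := by
    intro s hs
    have key := Convex.norm_image_sub_le_of_norm_hasDerivWithin_le
      (f := fun t : ℝ => g1 (t * s)) (f' := fun t : ℝ => s • g2 (t * s))
      (s := Set.Icc (0:ℝ) 1) (x := (0:ℝ)) (y := (1:ℝ)) (C := K * |s| ^ 2)
      (fun t _ => by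
        have h := (hg1deriv (t * s)).scomp t (hasDerivAt_mul_const s)
        exact h.hasDerivWithinAt)
      (fun t ht => by
        have hts : |t * s| ≤ |s| := by
          rw [abs_mul]
          have h1 : |t| ≤ 1 := abs_le.2 ⟨by linarith [ht.1], ht.2⟩
          nlinarith [abs_nonneg s]
        have hb := b2 (t * s) (le_trans hts hs)
        calc ‖s • g2 (t * s)‖ = |s| * ‖g2 (t * s)‖ := by
              rw [norm_smul, Real.norm_eq_abs]
          _ ≤ |s| * (K * |t * s|) := mul_le_mul_of_nonneg_left hb (abs_nonneg s)
          _ = K * (|s| * |t * s|) := by ring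
          _ ≤ K * (|s| * |s|) := mul_le_mul_of_nonneg_left
              (mul_le_mul_of_nonneg_left hts (abs_nonneg s)) hK0
          _ = K * |s| ^ 2 := by ring)
      (convex_Icc _ _) (by norm_num) (by norm_num)
    have h10 : g1 0 = 0 := by simp [hg1]
    simpa [h10] using key
  refine ⟨K, hK0, fun s hs => ?_⟩
  have key := Convex.norm_image_sub_le_of_norm_hasDerivWithin_le
    (f := fun t : ℝ => g0 (t * s)) (f' := fun t : ℝ => s • g1 (t * s))
    (s := Set.Icc (0:ℝ) 1) (x := (0:ℝ)) (y := (1:ℝ)) (C := K * |s| ^ 3)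
    (fun t _ => by
      have h := (hg0deriv (t * s)).scomp t (hasDerivAt_mul_const s)
      exact h.hasDerivWithinAt)
    (fun t ht => by
      have hts : |t * s| ≤ |s| := by
        rw [abs_mul]
        have h1 : |t| ≤ 1 := abs_le.2 ⟨by linarith [ht.1], ht.2⟩
        nlinarith [abs_nonneg s]
      have hb := b1 (t * s) (le_trans hts hs)
      calc ‖s • g1 (t * s)‖ = |s| * ‖g1 (t * s)‖ := by
            rw [norm_smul, Real.norm_eq_abs]
        _ ≤ |s| * (K * |t * s| ^ 2) := mul_le_mul_of_nonneg_left hb (abs_nonneg s)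
        _ = K * (|s| * |t * s| ^ 2) := by ring
        _ ≤ K * (|s| * |s| ^ 2) := mul_le_mul_of_nonneg_left
            (mul_le_mul_of_nonneg_left (pow_le_pow_left₀ (abs_nonneg _) hts 2) (abs_nonneg s)) hK0
        _ = K * |s| ^ 3 := by ring)
    (convex_Icc _ _) (by norm_num) (by norm_num)
  have h00 : g0 0 = 0 := by simp [hg0]
  simpa [h00] using key


private lemma hd_cos (ω t : ℝ) : HasDerivAt (fun t => Real.cos (ω*t)) (-Real.sin (ω*t)*ω) t := by
  have h : HasDerivAt (fun t : ℝ => ω*t) ω t := by simpa using (hasDerivAt_id t).const_mul ω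
  exact (Real.hasDerivAt_cos (ω*t)).comp t h

private lemma hd_sin (ω t : ℝ) : HasDerivAt (fun t => Real.sin (ω*t)) (Real.cos (ω*t)*ω) t := by
  have h : HasDerivAt (fun t : ℝ => ω*t) ω t := by simpa using (hasDerivAt_id t).const_mul ω
  exact (Real.hasDerivAt_sin (ω*t)).comp t h

private lemma omega_T (ω : ℝ) (hω : 0 < ω) : ω * (2*Real.pi/ω) = 2*Real.pi := by
  field_simp

private lemma sin_int1 (ω : ℝ) (hω : 0 < ω) :
    ∫ t in (0:ℝ)..(2*Real.pi/ω), Real.sin (ω*t) = 0 := by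
  have key := intervalIntegral.integral_eq_sub_of_hasDerivAt
    (f := fun t => -Real.cos (ω*t)/ω) (f' := fun t => Real.sin (ω*t))
    (a := 0) (b := 2*Real.pi/ω)
    (fun t _ => by
      have := ((hd_cos ω t).fun_neg).div_const ω
      rw [neg_mul, neg_neg, mul_div_cancel_right₀ _ hω.ne'] at this
      exact this)
    (Continuous.intervalIntegrable (by continuity) _ _)
  rw [key]
  simp [omega_T ω hω]

private lemma sin_int2 (ω : ℝ) (hω : 0 < ω) :
    ∫ t in (0:ℝ)..(2*Real.pi/ω), Real.sin (ω*t)^2 = Real.pi/ω := by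
  have key := intervalIntegral.integral_eq_sub_of_hasDerivAt
    (f := fun t => t/2 - Real.sin (ω*t)*Real.cos (ω*t)/(2*ω))
    (f' := fun t => Real.sin (ω*t)^2)
    (a := 0) (b := 2*Real.pi/ω)
    (fun t _ => by
      have h1 : HasDerivAt (fun t : ℝ => t/2) (1/2 : ℝ) t := by
        simpa using (hasDerivAt_id t).div_const 2
      have h2 := (((hd_sin ω t).fun_mul (hd_cos ω t))).div_const (2*ω)
      have h3 := h1.fun_sub h2
      convert h3 using 1
      have hpy := Real.sin_sq_add_cos_sq (ω*t)
      field_simp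
      linear_combination hpy)
    (Continuous.intervalIntegrable (by continuity) _ _)
  rw [key]
  simp [omega_T ω hω]
  field_simp

private lemma sin_int3 (ω : ℝ) (hω : 0 < ω) :
    ∫ t in (0:ℝ)..(2*Real.pi/ω), Real.sin (ω*t)^3 = 0 := by
  have key := intervalIntegral.integral_eq_sub_of_hasDerivAt
    (f := fun t => Real.cos (ω*t)^3/(3*ω) - Real.cos (ω*t)/ω)
    (f' := fun t => Real.sin (ω*t)^3)
    (a := 0) (b := 2*Real.pi/ω)
    (fun t _ => by
      have h1 := ((hd_cos ω t).fun_pow 3).div_const (3*ω)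
      have h2 := (hd_cos ω t).div_const ω
      have h3 := h1.fun_sub h2
      convert h3 using 1
      have hpy := Real.sin_sq_add_cos_sq (ω*t)
      field_simp
      linear_combination (3*Real.sin (ω*t)) * hpy)
    (Continuous.intervalIntegrable (by continuity) _ _)
  rw [key]
  simp [omega_T ω hω]



private lemma integral_decomp_a {V : Type*} [NormedAddCommGroup V] [NormedSpace ℝ V]
    [CompleteSpace V]
    (u : ℝ → V) (hu : Continuous u) (ω γ : ℝ) (hω : 0 < ω) (u1 u2 : V) :
    (∫ t in (0:ℝ)..(2*Real.pi/ω), u (γ * Real.sin (ω*t)))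
      = (2*Real.pi/ω) • u 0 + (γ^2*(Real.pi/ω)/2) • u2
        + ∫ t in (0:ℝ)..(2*Real.pi/ω),
            (u (γ * Real.sin (ω*t)) - u 0 - (γ * Real.sin (ω*t)) • u1
              - ((γ * Real.sin (ω*t))^2/2) • u2) := by
  have if0 : IntervalIntegrable (fun t => u (γ * Real.sin (ω*t))) MeasureTheory.volume
      0 (2*Real.pi/ω) := (hu.comp (by fun_prop)).intervalIntegrable _ _
  have ic : IntervalIntegrable (fun _ : ℝ => u 0) MeasureTheory.volume 0 (2*Real.pi/ω) :=
    (continuous_const).intervalIntegrable _ _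
  have if1 : IntervalIntegrable (fun t => (γ * Real.sin (ω*t)) • u1) MeasureTheory.volume
      0 (2*Real.pi/ω) := (Continuous.intervalIntegrable (by fun_prop)) _ _
  have if2 : IntervalIntegrable (fun t => ((γ * Real.sin (ω*t))^2/2) • u2) MeasureTheory.volume
      0 (2*Real.pi/ω) := (Continuous.intervalIntegrable (by fun_prop)) _ _
  rw [intervalIntegral.integral_sub ((if0.sub ic).sub if1) if2,
      intervalIntegral.integral_sub (if0.sub ic) if1,
      intervalIntegral.integral_sub if0 ic]
  have e0 : (∫ _ in (0:ℝ)..(2*Real.pi/ω), u 0) = (2*Real.pi/ω) • u 0 := by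
    simp
  have e1 : (∫ t in (0:ℝ)..(2*Real.pi/ω), (γ * Real.sin (ω*t)) • u1) = (0:ℝ) • u1 := by
    rw [intervalIntegral.integral_smul_const, intervalIntegral.integral_const_mul,
      sin_int1 ω hω, mul_zero]
  have e2 : (∫ t in (0:ℝ)..(2*Real.pi/ω), ((γ * Real.sin (ω*t))^2/2) • u2)
      = (γ^2*(Real.pi/ω)/2) • u2 := by
    have : (fun t => ((γ * Real.sin (ω*t))^2/2) • u2)
        = fun t => ((γ^2/2) * (Real.sin (ω*t))^2) • u2 := by
      funext t; congr 1; ring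
    rw [this, intervalIntegral.integral_smul_const, intervalIntegral.integral_const_mul,
      sin_int2 ω hω]
    congr 1; ring
  rw [e0, e1, e2]
  module

private lemma integral_decomp_b {V : Type*} [NormedAddCommGroup V] [NormedSpace ℝ V]
    [CompleteSpace V]
    (u : ℝ → V) (hu : Continuous u) (ω γ : ℝ) (hω : 0 < ω) (u1 u2 : V) :
    (∫ t in (0:ℝ)..(2*Real.pi/ω), Real.sin (ω*t) • u (γ * Real.sin (ω*t)))
      = (γ*(Real.pi/ω)) • u1
        + ∫ t in (0:ℝ)..(2*Real.pi/ω),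
            Real.sin (ω*t) • (u (γ * Real.sin (ω*t)) - u 0 - (γ * Real.sin (ω*t)) • u1
              - ((γ * Real.sin (ω*t))^2/2) • u2) := by
  have if0 : IntervalIntegrable (fun t => Real.sin (ω*t) • u (γ * Real.sin (ω*t)))
      MeasureTheory.volume 0 (2*Real.pi/ω) :=
    (Continuous.intervalIntegrable (by fun_prop)) _ _
  have ic : IntervalIntegrable (fun t : ℝ => Real.sin (ω*t) • u 0) MeasureTheory.volume
      0 (2*Real.pi/ω) := (Continuous.intervalIntegrable (by fun_prop)) _ _
  have if1 : IntervalIntegrable (fun t => Real.sin (ω*t) • ((γ * Real.sin (ω*t)) • u1))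
      MeasureTheory.volume 0 (2*Real.pi/ω) := (Continuous.intervalIntegrable (by fun_prop)) _ _
  have if2 : IntervalIntegrable (fun t => Real.sin (ω*t) • (((γ * Real.sin (ω*t))^2/2) • u2))
      MeasureTheory.volume 0 (2*Real.pi/ω) := (Continuous.intervalIntegrable (by fun_prop)) _ _
  have hfun : (fun t => Real.sin (ω*t) • (u (γ * Real.sin (ω*t)) - u 0
        - (γ * Real.sin (ω*t)) • u1 - ((γ * Real.sin (ω*t))^2/2) • u2))
      = fun t => Real.sin (ω*t) • u (γ * Real.sin (ω*t)) - Real.sin (ω*t) • u 0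
        - Real.sin (ω*t) • ((γ * Real.sin (ω*t)) • u1)
        - Real.sin (ω*t) • (((γ * Real.sin (ω*t))^2/2) • u2) := by
    funext t; simp [smul_sub]
  rw [hfun, intervalIntegral.integral_sub ((if0.sub ic).sub if1) if2,
      intervalIntegral.integral_sub (if0.sub ic) if1,
      intervalIntegral.integral_sub if0 ic]
  have e0 : (∫ t in (0:ℝ)..(2*Real.pi/ω), Real.sin (ω*t) • u 0) = (0:ℝ) • u 0 := by
    rw [intervalIntegral.integral_smul_const, sin_int1 ω hω]
  have e1 : (∫ t in (0:ℝ)..(2*Real.pi/ω), Real.sin (ω*t) • ((γ * Real.sin (ω*t)) • u1))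
      = (γ*(Real.pi/ω)) • u1 := by
    have : (fun t => Real.sin (ω*t) • ((γ * Real.sin (ω*t)) • u1))
        = fun t => (γ * (Real.sin (ω*t))^2) • u1 := by
      funext t; rw [smul_smul]; congr 1; ring
    rw [this, intervalIntegral.integral_smul_const, intervalIntegral.integral_const_mul,
      sin_int2 ω hω]
  have e2 : (∫ t in (0:ℝ)..(2*Real.pi/ω),
      Real.sin (ω*t) • (((γ * Real.sin (ω*t))^2/2) • u2)) = (0:ℝ) • u2 := by
    have : (fun t => Real.sin (ω*t) • (((γ * Real.sin (ω*t))^2/2) • u2))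
        = fun t => ((γ^2/2) * (Real.sin (ω*t))^3) • u2 := by
      funext t; rw [smul_smul]; congr 1; ring
    rw [this, intervalIntegral.integral_smul_const, intervalIntegral.integral_const_mul,
      sin_int3 ω hω, mul_zero]
  rw [e0, e1, e2]
  module


private lemma euclid_coord_le {N : ℕ} (w : EuclideanSpace ℝ (Fin N)) (i : Fin N) :
    |w i| ≤ ‖w‖ := by
  rw [EuclideanSpace.norm_eq, ← Real.sqrt_sq_eq_abs]
  apply Real.sqrt_le_sqrt
  have : |w i| ^ 2 = ‖w i‖ ^ 2 := by rw [Real.norm_eq_abs]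
  calc w i ^ 2 = ‖w i‖ ^ 2 := by rw [Real.norm_eq_abs, sq_abs]
    _ ≤ ∑ i', ‖w i'‖ ^ 2 := Finset.single_le_sum (f := fun i' => ‖w i'‖ ^ 2)
        (fun _ _ => by positivity) (Finset.mem_univ i)


private lemma grad_identity {N : ℕ}
    (S : Finset (Fin N × Fin N)) (x : Fin N → ℝ)
    (Enl : EuclideanSpace ℝ (Fin N) → ℝ) (hEnl : ContDiff ℝ 3 Enl)
    (C : EuclideanSpace ℝ (Fin N) → ℝ) (hC : ContDiff ℝ 2 C)
    (E : (↥S → ℝ) → EuclideanSpace ℝ (Fin N) → ℝ)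
    (hEdef : ∀ (θ : ↥S → ℝ) (v : EuclideanSpace ℝ (Fin N)),
      E θ v = Enl v +
        (1 / 2) * ∑ p : ↥S, θ p * (v (p : Fin N × Fin N).1 - v (p : Fin N × Fin N).2) ^ 2 +
        ∑ j, x j * v j)
    (vstar : (↥S → ℝ) → ℝ → EuclideanSpace ℝ (Fin N))
    (hv : ContDiff ℝ 3 (fun q : (↥S → ℝ) × ℝ => vstar q.1 q.2))
    (heq : ∀ (θ : ↥S → ℝ) (β : ℝ),
      gradient (fun w => E θ w + β * C w) (vstar θ β) = 0)
    (L : (↥S → ℝ) → ℝ) (hL : ∀ θ, L θ = C (vstar θ 0))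
    (θ : ↥S → ℝ) (j k : Fin N) (hjk : (j, k) ∈ S) :
    fderiv ℝ L θ (Pi.single (⟨(j, k), hjk⟩ : ↥S) 1)
      = (vstar θ 0 j - vstar θ 0 k) *
        (deriv (fun β => vstar θ β) 0 j - deriv (fun β => vstar θ β) 0 k) := by
  classical
  set Vs : ((↥S → ℝ) × ℝ) → EuclideanSpace ℝ (Fin N) := fun q => vstar q.1 q.2 with hVsdef
  have hVs : ContDiff ℝ 3 Vs := hv
  set Et : (↥S → ℝ) × EuclideanSpace ℝ (Fin N) → ℝ := fun z => Enl z.2 +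
      (1 / 2) * ∑ p : ↥S, z.1 p * (z.2 (p : Fin N × Fin N).1 - z.2 (p : Fin N × Fin N).2) ^ 2 +
      ∑ i, x i * z.2 i with hEtdef
  have hproj : ∀ i : Fin N,
      ContDiff ℝ 3 (fun z : (↥S → ℝ) × EuclideanSpace ℝ (Fin N) => z.2 i) := by
    intro i
    have h1 : ContDiff ℝ 3 (fun z : (↥S → ℝ) × EuclideanSpace ℝ (Fin N) =>
        (EuclideanSpace.proj (𝕜 := ℝ) i) z.2) :=
      (EuclideanSpace.proj (𝕜 := ℝ) i).contDiff.comp contDiff_snd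
    exact h1
  have hcoord : ∀ p : ↥S,
      ContDiff ℝ 3 (fun z : (↥S → ℝ) × EuclideanSpace ℝ (Fin N) => z.1 p) := by
    intro p
    exact (contDiff_pi.1 contDiff_fst p)
  have hEt : ContDiff ℝ 3 Et := by
    rw [hEtdef]
    refine ((hEnl.comp contDiff_snd).add (contDiff_const.mul (ContDiff.sum fun p _ => ?_))).add
      (ContDiff.sum fun i _ => contDiff_const.mul (hproj i))
    exact (hcoord p).mul (((hproj _).sub (hproj _)).pow 2)
  have hVsd : ∀ q, HasFDerivAt Vs (fderiv ℝ Vs q) q := fun q =>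
    ((hVs.differentiable (by norm_num)) q).hasFDerivAt
  have hEtd : ∀ z, HasFDerivAt Et (fderiv ℝ Et z) z := fun z =>
    ((hEt.differentiable (by norm_num)) z).hasFDerivAt
  have hCd : ∀ v, HasFDerivAt C (fderiv ℝ C v) v := fun v =>
    ((hC.differentiable (by norm_num)) v).hasFDerivAt
  -- Step 1: partial derivative of Et in the θ directions
  have hEt_theta : ∀ (θ' : ↥S → ℝ) (v : EuclideanSpace ℝ (Fin N)) (e : ↥S → ℝ),
      fderiv ℝ Et (θ', v) (e, 0)
        = (1/2) * ∑ p : ↥S, e p * (v (p : Fin N × Fin N).1 - v (p : Fin N × Fin N).2)^2 := by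
    intro θ' v e
    have hsum : HasFDerivAt (fun θ'' : ↥S → ℝ =>
        ∑ p : ↥S, θ'' p * (v (p : Fin N × Fin N).1 - v (p : Fin N × Fin N).2)^2)
        (∑ p : ↥S, ((v (p : Fin N × Fin N).1 - v (p : Fin N × Fin N).2)^2) •
          (ContinuousLinearMap.proj (R := ℝ) (φ := fun _ : ↥S => ℝ) p)) θ' :=
      HasFDerivAt.fun_sum (fun p _ =>
        ((ContinuousLinearMap.proj (R := ℝ) (φ := fun _ : ↥S => ℝ) p).hasFDerivAt).mul_const _)
    have hlin : HasFDerivAt (fun θ'' : ↥S → ℝ => Et (θ'', v))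
        ((1/2 : ℝ) • ∑ p : ↥S, ((v (p : Fin N × Fin N).1 - v (p : Fin N × Fin N).2)^2) •
          (ContinuousLinearMap.proj (R := ℝ) (φ := fun _ : ↥S => ℝ) p)) θ' := by
      have h := ((hasFDerivAt_const (Enl v) θ').fun_add (hsum.const_mul (1/2))).fun_add
        (hasFDerivAt_const (∑ i, x i * v i) θ')
      simpa [hEtdef] using h
    have hcomp : HasFDerivAt (fun θ'' : ↥S → ℝ => Et (θ'', v))
        ((fderiv ℝ Et (θ', v)).comp (ContinuousLinearMap.inl ℝ _ _)) θ' := by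
      have h := (hEtd (θ', v)).comp θ' (hasFDerivAt_prodMk_left (𝕜 := ℝ) θ' v)
      exact h
    have huniq := hcomp.unique hlin
    have := congrArg (fun (T : ((↥S → ℝ)) →L[ℝ] ℝ) => T e) huniq
    simp only [ContinuousLinearMap.comp_apply, ContinuousLinearMap.inl_apply,
      ContinuousLinearMap.smul_apply, ContinuousLinearMap.sum_apply,
      ContinuousLinearMap.proj_apply, smul_eq_mul] at this
    rw [this, Finset.mul_sum, Finset.mul_sum]
    exact Finset.sum_congr rfl (fun p _ => by ring)
  -- Step 2: the equilibrium condition, in fderiv form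
  have hker : ∀ q : ((↥S → ℝ) × ℝ), ∀ h : EuclideanSpace ℝ (Fin N),
      fderiv ℝ Et (q.1, Vs q) (0, h) + q.2 * fderiv ℝ C (Vs q) h = 0 := by
    intro q h
    have hEfun : (fun w => E q.1 w + q.2 * C w) = fun w => Et (q.1, w) + q.2 * C w := by
      funext w; rw [hEdef, hEtdef]
    have hgrad : gradient (fun w => E q.1 w + q.2 * C w) (Vs q) = 0 := heq q.1 q.2
    have hfzero : fderiv ℝ (fun w => E q.1 w + q.2 * C w) (Vs q) = 0 := by
      unfold gradient at hgrad
      have := congrArg (InnerProductSpace.toDual ℝ (EuclideanSpace ℝ (Fin N))) hgrad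
      simpa using this
    have h1 : HasFDerivAt (fun w => Et (q.1, w))
        ((fderiv ℝ Et (q.1, Vs q)).comp (ContinuousLinearMap.inr ℝ _ _)) (Vs q) :=
      (hEtd _).comp _ (hasFDerivAt_prodMk_right q.1 (Vs q))
    have h2 : HasFDerivAt (fun w => q.2 * C w) (q.2 • fderiv ℝ C (Vs q)) (Vs q) :=
      (hCd _).const_mul q.2
    have h3 := h1.fun_add h2
    rw [← hEfun] at h3
    have h4 := h3.fderiv
    rw [hfzero] at h4
    have h5 := congrArg (fun (T : (EuclideanSpace ℝ (Fin N)) →L[ℝ] ℝ) => T h) h4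
    simpa [ContinuousLinearMap.comp_apply, ContinuousLinearMap.inr_apply,
      ContinuousLinearMap.add_apply, ContinuousLinearMap.smul_apply, smul_eq_mul] using h5.symm
  -- Step 3: F and its first derivative
  set F : ((↥S → ℝ) × ℝ) → ℝ := fun q => Et (q.1, Vs q) + q.2 * C (Vs q) with hFdef
  have hF : ContDiff ℝ 2 F := by
    rw [hFdef]
    exact ((hEt.of_le (by norm_num)).comp (contDiff_fst.prodMk (hVs.of_le (by norm_num)))).add
      (contDiff_snd.mul (hC.comp (hVs.of_le (by norm_num))))
  have hFval : ∀ q : ((↥S → ℝ) × ℝ), ∀ w : ((↥S → ℝ) × ℝ),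
      fderiv ℝ F q w = fderiv ℝ Et (q.1, Vs q) (w.1, 0) + w.2 * C (Vs q) := by
    intro q w
    have hA : HasFDerivAt (fun q' : ((↥S → ℝ) × ℝ) => Et (q'.1, Vs q'))
        ((fderiv ℝ Et (q.1, Vs q)).comp
          ((ContinuousLinearMap.fst ℝ _ _).prod (fderiv ℝ Vs q))) q :=
      (hEtd _).comp q ((hasFDerivAt_fst).prodMk (hVsd q))
    have hB : HasFDerivAt (fun q' : ((↥S → ℝ) × ℝ) => q'.2 * C (Vs q'))
        (q.2 • ((fderiv ℝ C (Vs q)).comp (fderiv ℝ Vs q)) +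
          C (Vs q) • (ContinuousLinearMap.snd ℝ _ _)) q :=
      (hasFDerivAt_snd).mul ((hCd _).comp q (hVsd q))
    have hAB := (hA.fun_add hB).fderiv
    have h5 := congrArg (fun (T : ((↥S → ℝ) × ℝ) →L[ℝ] ℝ) => T w) hAB
    simp only [ContinuousLinearMap.add_apply, ContinuousLinearMap.comp_apply,
      ContinuousLinearMap.prod_apply, ContinuousLinearMap.coe_fst', ContinuousLinearMap.coe_snd',
      ContinuousLinearMap.smul_apply, smul_eq_mul] at h5
    have hsplit : ((w.1, (fderiv ℝ Vs q) w) : (↥S → ℝ) × EuclideanSpace ℝ (Fin N))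
        = (w.1, 0) + (0, (fderiv ℝ Vs q) w) := by simp
    rw [hsplit, map_add] at h5
    have hk := hker q ((fderiv ℝ Vs q) w)
    rw [hFdef]
    rw [h5]
    linarith [hk]
  -- Step 4: second-derivative symmetry
  set q0 : ((↥S → ℝ) × ℝ) := (θ, 0) with hq0def
  set e0 : ↥S → ℝ := Pi.single (⟨(j, k), hjk⟩ : ↥S) 1 with he0def
  set w1 : ((↥S → ℝ) × ℝ) := (e0, 0) with hw1def
  set w2 : ((↥S → ℝ) × ℝ) := ((0 : ↥S → ℝ), (1:ℝ)) with hw2def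
  have hFdAll : ∀ y, HasFDerivAt F (fderiv ℝ F y) y := fun y =>
    ((hF.differentiable (by norm_num)) y).hasFDerivAt
  have hF' : HasFDerivAt (fderiv ℝ F) (fderiv ℝ (fderiv ℝ F) q0) q0 := by
    have h1 : ContDiff ℝ 1 (fderiv ℝ F) := hF.fderiv_right (by norm_num)
    exact ((h1.differentiable (by norm_num)) q0).hasFDerivAt
  have hsymm := second_derivative_symmetric hFdAll hF' w1 w2
  have hmix : ∀ w : ((↥S → ℝ) × ℝ), HasFDerivAt (fun q => fderiv ℝ F q w)
      ((ContinuousLinearMap.apply ℝ ℝ w).comp (fderiv ℝ (fderiv ℝ F) q0)) q0 :=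
    fun w => (ContinuousLinearMap.apply ℝ ℝ w).hasFDerivAt.comp q0 hF'
  -- Step 5: identify the two directional-derivative functions
  have hgfun : (fun q : ((↥S → ℝ) × ℝ) => fderiv ℝ F q w1)
      = fun q => (1/2) * ((Vs q j - Vs q k) * (Vs q j - Vs q k)) := by
    funext q
    rw [hFval q w1, hw1def]
    rw [hEt_theta]
    have hsum : ∑ p : ↥S, e0 p * (Vs q (p : Fin N × Fin N).1 - Vs q (p : Fin N × Fin N).2)^2
        = (Vs q j - Vs q k)^2 := by
      rw [he0def, Finset.sum_eq_single (⟨(j,k),hjk⟩ : ↥S)]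
      · simp
      · intro b _ hb; simp [Pi.single_eq_of_ne hb]
      · simp
    rw [hsum]
    ring
  have hhfun : (fun q : ((↥S → ℝ) × ℝ) => fderiv ℝ F q w2) = fun q => C (Vs q) := by
    funext q
    rw [hFval q w2, hw2def]
    have hz : (((0 : ↥S → ℝ), (0 : EuclideanSpace ℝ (Fin N)))
        : (↥S → ℝ) × EuclideanSpace ℝ (Fin N)) = 0 := rfl
    simp [hz]
  -- Step 6: derivatives of coordinates and of u
  set u : ℝ → EuclideanSpace ℝ (Fin N) := fun β => vstar θ β with hudef
  have hu1 : HasDerivAt u (fderiv ℝ Vs q0 w2) 0 := by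
    have hι : HasDerivAt (fun β : ℝ => ((θ, β) : (↥S → ℝ) × ℝ)) w2 0 :=
      (hasDerivAt_const (0:ℝ) θ).prodMk (hasDerivAt_id (0:ℝ))
    exact (hVsd q0).comp_hasDerivAt 0 hι
  have hderivu : deriv u 0 = fderiv ℝ Vs q0 w2 := hu1.deriv
  have hprojj : HasFDerivAt (fun q => Vs q j)
      ((EuclideanSpace.proj (𝕜 := ℝ) j).comp (fderiv ℝ Vs q0)) q0 :=
    ((EuclideanSpace.proj (𝕜 := ℝ) j).hasFDerivAt).comp q0 (hVsd q0)
  have hprojk : HasFDerivAt (fun q => Vs q k)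
      ((EuclideanSpace.proj (𝕜 := ℝ) k).comp (fderiv ℝ Vs q0)) q0 :=
    ((EuclideanSpace.proj (𝕜 := ℝ) k).hasFDerivAt).comp q0 (hVsd q0)
  have hphi : HasFDerivAt (fun q => Vs q j - Vs q k)
      (((EuclideanSpace.proj (𝕜 := ℝ) j).comp (fderiv ℝ Vs q0))
        - ((EuclideanSpace.proj (𝕜 := ℝ) k).comp (fderiv ℝ Vs q0))) q0 := hprojj.sub hprojk
  have hgderiv : HasFDerivAt
      (fun q => (1/2) * ((Vs q j - Vs q k) * (Vs q j - Vs q k)))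
      (((1:ℝ)/2) • ((Vs q0 j - Vs q0 k) •
          (((EuclideanSpace.proj (𝕜 := ℝ) j).comp (fderiv ℝ Vs q0))
            - ((EuclideanSpace.proj (𝕜 := ℝ) k).comp (fderiv ℝ Vs q0)))
        + (Vs q0 j - Vs q0 k) •
          (((EuclideanSpace.proj (𝕜 := ℝ) j).comp (fderiv ℝ Vs q0))
            - ((EuclideanSpace.proj (𝕜 := ℝ) k).comp (fderiv ℝ Vs q0))))) q0 :=
    (hphi.mul hphi).const_mul (1/2)
  have hCVs : HasFDerivAt (fun q => C (Vs q))
      ((fderiv ℝ C (Vs q0)).comp (fderiv ℝ Vs q0)) q0 := (hCd _).comp q0 (hVsd q0)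
  have hLd : HasFDerivAt L
      (((fderiv ℝ C (Vs q0)).comp (fderiv ℝ Vs q0)).comp
        (ContinuousLinearMap.inl ℝ (↥S → ℝ) ℝ)) θ := by
    have hLfun : L = (fun q : ((↥S → ℝ) × ℝ) => C (Vs q)) ∘
        (fun θ' : ↥S → ℝ => ((θ', (0:ℝ)) : (↥S → ℝ) × ℝ)) := by
      funext θ'; simp [hL θ', hVsdef]
    rw [hLfun]
    exact hCVs.comp θ (hasFDerivAt_prodMk_left θ (0:ℝ))
  -- mixed partials via uniqueness
  have hmix2 : HasFDerivAt (fun q => C (Vs q))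
      ((ContinuousLinearMap.apply ℝ ℝ w2).comp (fderiv ℝ (fderiv ℝ F) q0)) q0 := by
    have := hmix w2; rwa [hhfun] at this
  have heq2 : (ContinuousLinearMap.apply ℝ ℝ w2).comp (fderiv ℝ (fderiv ℝ F) q0)
      = (fderiv ℝ C (Vs q0)).comp (fderiv ℝ Vs q0) := hmix2.unique hCVs
  have hmix1 : HasFDerivAt (fun q => (1/2) * ((Vs q j - Vs q k) * (Vs q j - Vs q k)))
      ((ContinuousLinearMap.apply ℝ ℝ w1).comp (fderiv ℝ (fderiv ℝ F) q0)) q0 := by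
    have := hmix w1; rwa [hgfun] at this
  have heq1 := hmix1.unique hgderiv
  -- assemble
  have step1 : fderiv ℝ L θ e0 = ((fderiv ℝ C (Vs q0)).comp (fderiv ℝ Vs q0)) (e0, 0) := by
    rw [hLd.fderiv]; simp
  have step2 : ((fderiv ℝ C (Vs q0)).comp (fderiv ℝ Vs q0)) (e0, 0)
      = fderiv ℝ (fderiv ℝ F) q0 w1 w2 := by
    rw [← heq2]; simp [hw1def]
  have step3 : fderiv ℝ (fderiv ℝ F) q0 w2 w1
      = (Vs q0 j - Vs q0 k) * (deriv u 0 j - deriv u 0 k) := by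
    have := congrArg (fun (T : ((↥S → ℝ) × ℝ) →L[ℝ] ℝ) => T w2) heq1
    simp only [ContinuousLinearMap.comp_apply, ContinuousLinearMap.apply_apply,
      ContinuousLinearMap.smul_apply, ContinuousLinearMap.add_apply,
      ContinuousLinearMap.sub_apply, smul_eq_mul] at this
    rw [this, hderivu]
    have hpj : (EuclideanSpace.proj (𝕜 := ℝ) j) ((fderiv ℝ Vs q0) w2)
        = (fderiv ℝ Vs q0) w2 j := rfl
    have hpk : (EuclideanSpace.proj (𝕜 := ℝ) k) ((fderiv ℝ Vs q0) w2)
        = (fderiv ℝ Vs q0) w2 k := rfl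
    rw [hpj, hpk]
    ring
  rw [step1, step2, hsymm, step3]


private lemma euclid_apply_comb3 {N : ℕ} (c d e : ℝ) (v w r : EuclideanSpace ℝ (Fin N))
    (i : Fin N) : (c • (d • v + e • w + r)) i = c * (d * v i + e * w i + r i) := rfl

private lemma euclid_apply_comb2 {N : ℕ} (c d : ℝ) (v r : EuclideanSpace ℝ (Fin N))
    (i : Fin N) : (c • (d • v + r)) i = c * (d * v i + r i) := rfl

/-- Frequency propagation performs gradient descent in resistive networks:
with energy `E θ v = E_nl v + (1/2)·Σ_{(j,k)∈S} θ_{jk}(v_j − v_k)² + Σ_j x_j v_j`,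
equilibrium state `v⋆` and loss `L θ = C (v⋆ θ 0)`, the Fourier coefficients
`a(γ) = (1/T)∫₀ᵀ v⋆ θ (γ sin ωt) dt` and `b(γ) = (2/T)∫₀ᵀ sin(ωt) • v⋆ θ (γ sin ωt) dt`
satisfy, for every edge `(j,k) ∈ S`,
`(a(γ)_j − a(γ)_k)(b(γ)_j − b(γ)_k) − γ·∂L/∂θ_{jk} = O(γ³)` as `γ → 0`. -/
theorem stmt13 {N : ℕ}
    (S : Finset (Fin N × Fin N)) (x : Fin N → ℝ)
    (Enl : EuclideanSpace ℝ (Fin N) → ℝ) (hEnl : ContDiff ℝ 3 Enl)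
    (C : EuclideanSpace ℝ (Fin N) → ℝ) (hC : ContDiff ℝ 2 C)
    (E : (↥S → ℝ) → EuclideanSpace ℝ (Fin N) → ℝ)
    (hEdef : ∀ (θ : ↥S → ℝ) (v : EuclideanSpace ℝ (Fin N)),
      E θ v = Enl v +
        (1 / 2) * ∑ p : ↥S, θ p * (v (p : Fin N × Fin N).1 - v (p : Fin N × Fin N).2) ^ 2 +
        ∑ j, x j * v j)
    (vstar : (↥S → ℝ) → ℝ → EuclideanSpace ℝ (Fin N))
    (hv : ContDiff ℝ 3 (fun q : (↥S → ℝ) × ℝ => vstar q.1 q.2))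
    (heq : ∀ (θ : ↥S → ℝ) (β : ℝ),
      gradient (fun w => E θ w + β * C w) (vstar θ β) = 0)
    (L : (↥S → ℝ) → ℝ) (hL : ∀ θ, L θ = C (vstar θ 0))
    (ω T : ℝ) (hω : 0 < ω) (hT : T = 2 * Real.pi / ω)
    (θ : ↥S → ℝ)
    (a b : ℝ → EuclideanSpace ℝ (Fin N))
    (ha : ∀ γ : ℝ, a γ = (1 / T) • ∫ t in (0 : ℝ)..T, vstar θ (γ * Real.sin (ω * t)))
    (hb : ∀ γ : ℝ,
      b γ = (2 / T) • ∫ t in (0 : ℝ)..T, Real.sin (ω * t) • vstar θ (γ * Real.sin (ω * t)))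
    (j k : Fin N) (hjk : (j, k) ∈ S) :
    Asymptotics.IsBigO (nhds (0 : ℝ))
      (fun γ : ℝ =>
        (a γ j - a γ k) * (b γ j - b γ k) -
          γ * fderiv ℝ L θ (Pi.single (⟨(j, k), hjk⟩ : ↥S) 1))
      (fun γ : ℝ => γ ^ 3) := by
  classical
  have hucont : ContDiff ℝ 3 (fun β => vstar θ β) :=
    hv.comp (contDiff_const.prodMk contDiff_id)
  obtain ⟨M, hM0, hM⟩ := cubic_taylor_bound hucont
  set u : ℝ → EuclideanSpace ℝ (Fin N) := fun β => vstar θ β with hudef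
  set u1 : EuclideanSpace ℝ (Fin N) := deriv u 0 with hu1def
  set u2 : EuclideanSpace ℝ (Fin N) := deriv (deriv u) 0 with hu2def
  set Δ0 : ℝ := u 0 j - u 0 k with hΔ0def
  set Δ1 : ℝ := u1 j - u1 k with hΔ1def
  set Δ2 : ℝ := u2 j - u2 k with hΔ2def
  have hπ : Real.pi ≠ 0 := ne_of_gt Real.pi_pos
  have hωne : ω ≠ 0 := ne_of_gt hω
  have hTpos : (0:ℝ) < 2*Real.pi/ω := by positivity
  have hD : fderiv ℝ L θ (Pi.single (⟨(j,k),hjk⟩ : ↥S) 1) = Δ0 * Δ1 :=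
    grad_identity S x Enl hEnl C hC E hEdef vstar hv heq L hL θ j k hjk
  -- expansion of a
  have hA : ∀ γ : ℝ, |γ| ≤ 1 → |a γ j - a γ k - Δ0 - (γ^2/4)*Δ2| ≤ 2*M * |γ|^3 := by
    intro γ hγ
    have hdec := integral_decomp_a u (hucont.continuous) ω γ hω u1 u2
    have haγ : a γ = (1/(2*Real.pi/ω)) • ((2*Real.pi/ω) • u 0
        + (γ^2*(Real.pi/ω)/2) • u2
        + ∫ t in (0:ℝ)..(2*Real.pi/ω), (u (γ * Real.sin (ω*t)) - u 0
            - (γ * Real.sin (ω*t)) • u1 - ((γ * Real.sin (ω*t))^2/2) • u2)) := by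
      rw [ha γ, hT, hdec]
    set R : EuclideanSpace ℝ (Fin N) := ∫ t in (0:ℝ)..(2*Real.pi/ω),
        (u (γ * Real.sin (ω*t)) - u 0 - (γ * Real.sin (ω*t)) • u1
          - ((γ * Real.sin (ω*t))^2/2) • u2) with hRdef
    clear_value R
    have hRnorm : ‖R‖ ≤ M * |γ|^3 * |2*Real.pi/ω - 0| := by
      rw [hRdef]
      apply intervalIntegral.norm_integral_le_of_norm_le_const
      intro t _
      have hs1 : |γ * Real.sin (ω*t)| ≤ |γ| := by
        rw [abs_mul]
        nlinarith [abs_nonneg γ, Real.abs_sin_le_one (ω*t), abs_nonneg (Real.sin (ω*t))]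
      have hMs := hM (γ * Real.sin (ω*t)) (le_trans hs1 hγ)
      refine le_trans hMs ?_
      exact mul_le_mul_of_nonneg_left (pow_le_pow_left₀ (abs_nonneg _) hs1 3) hM0
    have hRb : ‖R‖ ≤ M * |γ|^3*(2*Real.pi/ω) := by
      rwa [sub_zero, abs_of_pos hTpos] at hRnorm
    have hai : ∀ i, a γ i = (1/(2*Real.pi/ω)) * ((2*Real.pi/ω) * u 0 i
        + (γ^2*(Real.pi/ω)/2) * u2 i + R i) := by
      intro i
      rw [haγ]
      exact euclid_apply_comb3 _ _ _ _ _ _ i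
    have hkey : a γ j - a γ k - Δ0 - (γ^2/4)*Δ2
        = (1/(2*Real.pi/ω)) * (R j - R k) := by
      rw [hai j, hai k, hΔ0def, hΔ2def]
      have hc1 : (1/(2*Real.pi/ω))*(2*Real.pi/ω) = 1 := by field_simp
      have hc2 : (1/(2*Real.pi/ω))*(γ^2*(Real.pi/ω)/2) = γ^2/4 := by
        field_simp; ring
      linear_combination (u 0 j - u 0 k) * hc1 + (u2 j - u2 k) * hc2
    rw [hkey]
    have hRj := euclid_coord_le R j
    have hRk := euclid_coord_le R k
    have h1 : |(1/(2*Real.pi/ω)) * (R j - R k)| ≤ (1/(2*Real.pi/ω)) * (‖R‖ + ‖R‖) := by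
      rw [abs_mul, abs_of_pos (by positivity : (0:ℝ) < 1/(2*Real.pi/ω))]
      apply mul_le_mul_of_nonneg_left _ (by positivity)
      calc |R j - R k| ≤ |R j| + |R k| := abs_sub _ _
        _ ≤ ‖R‖ + ‖R‖ := add_le_add hRj hRk
    refine le_trans h1 ?_
    calc (1/(2*Real.pi/ω)) * (‖R‖ + ‖R‖)
        ≤ (1/(2*Real.pi/ω)) * (M * |γ|^3*(2*Real.pi/ω) + M * |γ|^3*(2*Real.pi/ω)) :=
          mul_le_mul_of_nonneg_left (add_le_add hRb hRb) (by positivity)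
      _ = 2*M * |γ|^3 := by field_simp; ring
  -- expansion of b
  have hB : ∀ γ : ℝ, |γ| ≤ 1 → |b γ j - b γ k - γ*Δ1| ≤ 4*M * |γ|^3 := by
    intro γ hγ
    have hdec := integral_decomp_b u (hucont.continuous) ω γ hω u1 u2
    have hbγ : b γ = (2/(2*Real.pi/ω)) • ((γ*(Real.pi/ω)) • u1
        + ∫ t in (0:ℝ)..(2*Real.pi/ω), Real.sin (ω*t) • (u (γ * Real.sin (ω*t)) - u 0
            - (γ * Real.sin (ω*t)) • u1 - ((γ * Real.sin (ω*t))^2/2) • u2)) := by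
      rw [hb γ, hT, hdec]
    set R : EuclideanSpace ℝ (Fin N) := ∫ t in (0:ℝ)..(2*Real.pi/ω),
        Real.sin (ω*t) • (u (γ * Real.sin (ω*t)) - u 0 - (γ * Real.sin (ω*t)) • u1
          - ((γ * Real.sin (ω*t))^2/2) • u2) with hRdef
    clear_value R
    have hRnorm : ‖R‖ ≤ M * |γ|^3 * |2*Real.pi/ω - 0| := by
      rw [hRdef]
      apply intervalIntegral.norm_integral_le_of_norm_le_const
      intro t _
      have hs1 : |γ * Real.sin (ω*t)| ≤ |γ| := by
        rw [abs_mul]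
        nlinarith [abs_nonneg γ, Real.abs_sin_le_one (ω*t), abs_nonneg (Real.sin (ω*t))]
      have hMs := hM (γ * Real.sin (ω*t)) (le_trans hs1 hγ)
      rw [norm_smul, Real.norm_eq_abs]
      calc |Real.sin (ω*t)| * ‖u (γ * Real.sin (ω*t)) - u 0 - (γ * Real.sin (ω*t)) • u1
            - ((γ * Real.sin (ω*t))^2/2) • u2‖
          ≤ 1 * (M * |γ|^3) := by
            apply mul_le_mul (Real.abs_sin_le_one (ω*t)) _ (norm_nonneg _) zero_le_one
            refine le_trans hMs ?_
            exact mul_le_mul_of_nonneg_left (pow_le_pow_left₀ (abs_nonneg _) hs1 3) hM0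
        _ = M * |γ|^3 := one_mul _
    have hRb : ‖R‖ ≤ M * |γ|^3*(2*Real.pi/ω) := by
      rwa [sub_zero, abs_of_pos hTpos] at hRnorm
    have hbi : ∀ i, b γ i = (2/(2*Real.pi/ω)) * ((γ*(Real.pi/ω)) * u1 i + R i) := by
      intro i
      rw [hbγ]
      exact euclid_apply_comb2 _ _ _ _ i
    have hkey : b γ j - b γ k - γ*Δ1 = (2/(2*Real.pi/ω)) * (R j - R k) := by
      rw [hbi j, hbi k, hΔ1def]
      have hcd : (2/(2*Real.pi/ω))*(γ*(Real.pi/ω)) = γ := by field_simp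
      linear_combination (u1 j - u1 k) * hcd
    rw [hkey]
    have hRj := euclid_coord_le R j
    have hRk := euclid_coord_le R k
    have h1 : |(2/(2*Real.pi/ω)) * (R j - R k)| ≤ (2/(2*Real.pi/ω)) * (‖R‖ + ‖R‖) := by
      rw [abs_mul, abs_of_pos (by positivity : (0:ℝ) < 2/(2*Real.pi/ω))]
      apply mul_le_mul_of_nonneg_left _ (by positivity)
      calc |R j - R k| ≤ |R j| + |R k| := abs_sub _ _
        _ ≤ ‖R‖ + ‖R‖ := add_le_add hRj hRk
    refine le_trans h1 ?_
    calc (2/(2*Real.pi/ω)) * (‖R‖ + ‖R‖)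
        ≤ (2/(2*Real.pi/ω)) * (M * |γ|^3*(2*Real.pi/ω) + M * |γ|^3*(2*Real.pi/ω)) :=
          mul_le_mul_of_nonneg_left (add_le_add hRb hRb) (by positivity)
      _ = 4*M * |γ|^3 := by field_simp; ring
  -- conclusion
  rw [Asymptotics.isBigO_iff]
  refine ⟨4*M * |Δ0| + |Δ2| * |Δ1|/4 + M * |Δ2| + 2*M * |Δ1| + 8*M*M, ?_⟩
  filter_upwards [Metric.ball_mem_nhds (0:ℝ) one_pos] with γ hγball
  have hγ1 : |γ| ≤ 1 := by
    have h := Metric.mem_ball.1 hγball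
    rw [Real.dist_eq, sub_zero] at h
    exact le_of_lt h
  have hEA := hA γ hγ1
  have hEB := hB γ hγ1
  set EA : ℝ := a γ j - a γ k - Δ0 - (γ^2/4)*Δ2 with hEAdef
  set EB : ℝ := b γ j - b γ k - γ*Δ1 with hEBdef
  have e1 : a γ j - a γ k = Δ0 + (γ^2/4)*Δ2 + EA := by rw [hEAdef]; ring
  have e2 : b γ j - b γ k = γ*Δ1 + EB := by rw [hEBdef]; ring
  rw [Real.norm_eq_abs, Real.norm_eq_abs, hD, e1, e2, abs_pow]
  have hexp : (Δ0 + γ^2/4*Δ2 + EA)*(γ*Δ1 + EB) - γ*(Δ0*Δ1)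
      = Δ0*EB + (γ^3/4)*(Δ2*Δ1) + ((γ^2/4)*Δ2)*EB + EA*(γ*Δ1) + EA*EB := by ring
  rw [hexp]
  have habs : |Δ0*EB + (γ^3/4)*(Δ2*Δ1) + ((γ^2/4)*Δ2)*EB + EA*(γ*Δ1) + EA*EB|
      ≤ |Δ0*EB| + |(γ^3/4)*(Δ2*Δ1)| + |((γ^2/4)*Δ2)*EB| + |EA*(γ*Δ1)| + |EA*EB| := by
    calc |Δ0*EB + (γ^3/4)*(Δ2*Δ1) + ((γ^2/4)*Δ2)*EB + EA*(γ*Δ1) + EA*EB|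
        ≤ |Δ0*EB + (γ^3/4)*(Δ2*Δ1) + ((γ^2/4)*Δ2)*EB + EA*(γ*Δ1)| + |EA*EB| := abs_add_le _ _
      _ ≤ (|Δ0*EB + (γ^3/4)*(Δ2*Δ1) + ((γ^2/4)*Δ2)*EB| + |EA*(γ*Δ1)|) + |EA*EB| :=
          add_le_add_left (abs_add_le _ _) _
      _ ≤ ((|Δ0*EB + (γ^3/4)*(Δ2*Δ1)| + |((γ^2/4)*Δ2)*EB|) + |EA*(γ*Δ1)|) + |EA*EB| :=
          add_le_add_left (add_le_add_left (abs_add_le _ _) _) _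
      _ ≤ (((|Δ0*EB| + |(γ^3/4)*(Δ2*Δ1)|) + |((γ^2/4)*Δ2)*EB|) + |EA*(γ*Δ1)|) + |EA*EB| :=
          add_le_add_left (add_le_add_left (add_le_add_left (abs_add_le _ _) _) _) _
      _ = |Δ0*EB| + |(γ^3/4)*(Δ2*Δ1)| + |((γ^2/4)*Δ2)*EB| + |EA*(γ*Δ1)| + |EA*EB| := by ring
  have hg2le : |γ|^2 ≤ 1 := pow_le_one₀ (abs_nonneg γ) hγ1
  have hg3le : |γ|^3 ≤ 1 := pow_le_one₀ (abs_nonneg γ) hγ1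
  have hB1 : |Δ0*EB| ≤ |Δ0| *(4*M * |γ|^3) := by
    rw [abs_mul]; exact mul_le_mul_of_nonneg_left hEB (abs_nonneg _)
  have hB2 : |(γ^3/4)*(Δ2*Δ1)| = (|Δ2| * |Δ1|/4) * |γ|^3 := by
    rw [abs_mul, abs_div, abs_pow, abs_mul]
    norm_num
    ring
  have hB3 : |((γ^2/4)*Δ2)*EB| ≤ M * |Δ2| * |γ|^3 := by
    rw [abs_mul, abs_mul, abs_div, abs_pow]
    calc (|γ| ^ 2 / |(4:ℝ)| * |Δ2|) * |EB| ≤ (|γ|^2/|(4:ℝ)| * |Δ2|)*(4*M * |γ|^3) :=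
          mul_le_mul_of_nonneg_left hEB (by positivity)
      _ = (M * |Δ2| * |γ|^3) * |γ|^2 := by rw [abs_of_pos (by norm_num : (0:ℝ) < 4)]; ring
      _ ≤ (M * |Δ2| * |γ|^3)*1 := mul_le_mul_of_nonneg_left hg2le (by positivity)
      _ = M * |Δ2| * |γ|^3 := mul_one _
  have hB4 : |EA*(γ*Δ1)| ≤ 2*M * |Δ1| * |γ|^3 := by
    rw [abs_mul, abs_mul]
    calc |EA| *(|γ| * |Δ1|) ≤ (2*M * |γ|^3)*(|γ| * |Δ1|) :=
          mul_le_mul_of_nonneg_right hEA (by positivity)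
      _ = (2*M * |Δ1| * |γ|^3) * |γ| := by ring
      _ ≤ (2*M * |Δ1| * |γ|^3)*1 := mul_le_mul_of_nonneg_left hγ1 (by positivity)
      _ = 2*M * |Δ1| * |γ|^3 := mul_one _
  have hB5 : |EA*EB| ≤ 8*M*M * |γ|^3 := by
    rw [abs_mul]
    calc |EA| * |EB| ≤ (2*M * |γ|^3)*(4*M * |γ|^3) :=
          mul_le_mul hEA hEB (abs_nonneg _) (by positivity)
      _ = (8*M*M * |γ|^3) * |γ|^3 := by ring
      _ ≤ (8*M*M * |γ|^3)*1 := mul_le_mul_of_nonneg_left hg3le (by positivity)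
      _ = 8*M*M * |γ|^3 := mul_one _
  calc |Δ0*EB + (γ^3/4)*(Δ2*Δ1) + ((γ^2/4)*Δ2)*EB + EA*(γ*Δ1) + EA*EB|
      ≤ |Δ0*EB| + |(γ^3/4)*(Δ2*Δ1)| + |((γ^2/4)*Δ2)*EB| + |EA*(γ*Δ1)| + |EA*EB| := habs
    _ ≤ (4*M * |Δ0| + |Δ2| * |Δ1|/4 + M * |Δ2| + 2*M * |Δ1| + 8*M*M) * |γ|^3 := by
        rw [hB2]; nlinarith [hB1, hB3, hB4, hB5]
end

section
/- (Learning via chemical signaling performs exact gradient descent, abstract form.) Let Θ = EuclideanSpace ℝ (Fin m) and V = EuclideanSpace ℝ (Fin n). Let E : Θ → V → ℝ be C² on Θ × V, let C : V → ℝ be differentiable, and let v : Θ → V be differentiable with gradient (E θ) (v θ) = 0 for all θ ∈ Θ. Fix θ₀ ∈ Θ, β ∈ ℝ, and suppose u ∈ V satisfies the stationary chemical-concentration equation fderiv ℝ (fun w => gradient (E θ₀) w) (v θ₀) u = −β • gradient C (v θ₀). Define L : Θ → ℝ by L θ = C (v θ). Then for every direction h ∈ Θ, ⟪u, fderiv ℝ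 (fun θ' => gradient (E θ') (v θ₀)) θ₀ h⟫ = β · (fderiv ℝ L θ₀ h). -/
open scoped RealInnerProductSpace

/-- Learning via chemical signaling performs exact gradient descent,
abstract form: with `E : Θ → V → ℝ` C², `C` differentiable, equilibrium map `v` with
`∇_w E(θ, ·) |_{v θ} = 0`, and chemical concentration `u` satisfying the stationary
equation `Hess_w E(θ₀, ·)|_{v θ₀} u = −β • ∇C(v θ₀)`, the loss `L θ = C (v θ)` satisfies
`⟪u, ∂/∂θ [∇_w E(θ', ·) at v θ₀] · h⟫ = β · (∂L/∂θ · h)` for every direction `h`. -/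
theorem stmt15 {m n : ℕ}
    (E : EuclideanSpace ℝ (Fin m) → EuclideanSpace ℝ (Fin n) → ℝ)
    (hE : ContDiff ℝ 2
      (fun p : EuclideanSpace ℝ (Fin m) × EuclideanSpace ℝ (Fin n) => E p.1 p.2))
    (C : EuclideanSpace ℝ (Fin n) → ℝ) (hC : Differentiable ℝ C)
    (v : EuclideanSpace ℝ (Fin m) → EuclideanSpace ℝ (Fin n)) (hv : Differentiable ℝ v)
    (heq : ∀ θ : EuclideanSpace ℝ (Fin m), gradient (E θ) (v θ) = 0)
    (θ₀ : EuclideanSpace ℝ (Fin m)) (β : ℝ) (u : EuclideanSpace ℝ (Fin n))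
    (hu : fderiv ℝ (fun w => gradient (E θ₀) w) (v θ₀) u = -β • gradient C (v θ₀))
    (L : EuclideanSpace ℝ (Fin m) → ℝ) (hL : ∀ θ, L θ = C (v θ)) :
    ∀ h : EuclideanSpace ℝ (Fin m),
      ⟪u, fderiv ℝ (fun θ' => gradient (E θ') (v θ₀)) θ₀ h⟫ = β * fderiv ℝ L θ₀ h := by
  intro h
  set F : EuclideanSpace ℝ (Fin m) × EuclideanSpace ℝ (Fin n) → ℝ :=
    fun p => E p.1 p.2 with hF
  set p₀ : EuclideanSpace ℝ (Fin m) × EuclideanSpace ℝ (Fin n) := (θ₀, v θ₀) with hp₀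
  have hFd : Differentiable ℝ F := hE.differentiable two_ne_zero
  have hF1 : ContDiff ℝ 1 (fderiv ℝ F) := hE.fderiv_right (by norm_num)
  set ι : EuclideanSpace ℝ (Fin n) →L[ℝ]
      EuclideanSpace ℝ (Fin m) × EuclideanSpace ℝ (Fin n) :=
    ContinuousLinearMap.inr ℝ _ _ with hι
  set Φ : ((EuclideanSpace ℝ (Fin m) × EuclideanSpace ℝ (Fin n)) →L[ℝ] ℝ) →L[ℝ]
      EuclideanSpace ℝ (Fin n) :=
    ((InnerProductSpace.toDual ℝ
        (EuclideanSpace ℝ (Fin n))).symm.toContinuousLinearEquiv :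
        (EuclideanSpace ℝ (Fin n) →L[ℝ] ℝ) ≃L[ℝ]
          EuclideanSpace ℝ (Fin n)).toContinuousLinearMap.comp
      ((ContinuousLinearMap.compL ℝ (EuclideanSpace ℝ (Fin n))
        (EuclideanSpace ℝ (Fin m) × EuclideanSpace ℝ (Fin n)) ℝ).flip ι) with hΦ
  have hΦ_apply : ∀ (ℓ : (EuclideanSpace ℝ (Fin m) × EuclideanSpace ℝ (Fin n)) →L[ℝ] ℝ)
      (k : EuclideanSpace ℝ (Fin n)), ⟪Φ ℓ, k⟫ = ℓ (0, k) := by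
    intro ℓ k
    have : Φ ℓ = (InnerProductSpace.toDual ℝ
        (EuclideanSpace ℝ (Fin n))).symm (ℓ.comp ι) := rfl
    rw [this, InnerProductSpace.toDual_symm_apply]
    rfl
  have hG : ∀ p : EuclideanSpace ℝ (Fin m) × EuclideanSpace ℝ (Fin n),
      gradient (E p.1) p.2 = Φ (fderiv ℝ F p) := by
    intro p
    have hcomp : HasFDerivAt (fun w => F (p.1, w)) ((fderiv ℝ F p).comp ι) p.2 := by
      have := (hFd p).hasFDerivAt.comp (f := fun w => (p.1, w)) p.2 (hasFDerivAt_prodMk_right p.1 p.2)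
      exact this
    have hfd : fderiv ℝ (E p.1) p.2 = (fderiv ℝ F p).comp ι := hcomp.fderiv
    simp only [gradient, hfd]
    rfl
  set D2 := fderiv ℝ (fderiv ℝ F) p₀ with hD2
  have hA : HasFDerivAt (fun p => Φ (fderiv ℝ F p)) (Φ.comp D2) p₀ :=
    Φ.hasFDerivAt.comp p₀ (hF1.differentiable one_ne_zero p₀).hasFDerivAt
  have hsymm : ∀ a b : EuclideanSpace ℝ (Fin m) × EuclideanSpace ℝ (Fin n),
      D2 a b = D2 b a := fun a b => (hE.contDiffAt.isSymmSndFDerivAt (by simp)) a b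
  set Dv := fderiv ℝ v θ₀ with hDv
  have h1 : fderiv ℝ (fun θ' => gradient (E θ') (v θ₀)) θ₀
      = (Φ.comp D2).comp (ContinuousLinearMap.inl ℝ _ _) := by
    have hd : HasFDerivAt (fun θ' => Φ (fderiv ℝ F (θ', v θ₀)))
        ((Φ.comp D2).comp (ContinuousLinearMap.inl ℝ _ _)) θ₀ :=
      hA.comp (f := fun θ' => (θ', v θ₀)) θ₀ (hasFDerivAt_prodMk_left θ₀ (v θ₀))
    have heqfun : (fun θ' => gradient (E θ') (v θ₀))
        = fun θ' => Φ (fderiv ℝ F (θ', v θ₀)) := by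
      funext θ'; exact hG (θ', v θ₀)
    rw [heqfun]
    exact hd.fderiv
  have h2 : fderiv ℝ (fun w => gradient (E θ₀) w) (v θ₀) = (Φ.comp D2).comp ι := by
    have hd : HasFDerivAt (fun w => Φ (fderiv ℝ F (θ₀, w)))
        ((Φ.comp D2).comp ι) (v θ₀) :=
      hA.comp (f := fun w => (θ₀, w)) (v θ₀) (hasFDerivAt_prodMk_right θ₀ (v θ₀))
    have heqfun : (fun w => gradient (E θ₀) w)
        = fun w => Φ (fderiv ℝ F (θ₀, w)) := by
      funext w; exact hG (θ₀, w)
    rw [heqfun]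
    exact hd.fderiv
  have h3 : (Φ.comp D2).comp ((ContinuousLinearMap.id ℝ _).prod Dv) = 0 := by
    have hcomp : HasFDerivAt (fun θ => Φ (fderiv ℝ F (θ, v θ)))
        ((Φ.comp D2).comp ((ContinuousLinearMap.id ℝ _).prod Dv)) θ₀ :=
      hA.comp (f := fun θ => (θ, v θ)) θ₀ ((hasFDerivAt_id θ₀).prodMk (hv θ₀).hasFDerivAt)
    have hzero : (fun θ => Φ (fderiv ℝ F (θ, v θ)))
        = fun _ => (0 : EuclideanSpace ℝ (Fin n)) := by
      funext θ
      rw [← hG (θ, v θ)]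
      exact heq θ
    rw [hzero] at hcomp
    exact hcomp.unique (hasFDerivAt_const 0 θ₀)
  have h3h : Φ (D2 (h, Dv h)) = 0 := by
    have := congrArg (fun T => T h) h3
    simpa using this
  have key1 : ⟪u, fderiv ℝ (fun θ' => gradient (E θ') (v θ₀)) θ₀ h⟫
      = D2 (h, (0 : EuclideanSpace ℝ (Fin n))) (0, u) := by
    rw [h1, real_inner_comm]
    have hc : ((Φ.comp D2).comp (ContinuousLinearMap.inl ℝ _ _)) h
        = Φ (D2 (h, 0)) := rfl
    rw [hc, hΦ_apply]
  have key2 : Φ (D2 ((0 : EuclideanSpace ℝ (Fin m)), u)) = -β • gradient C (v θ₀) := by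
    rw [← hu, h2]
    rfl
  have split : D2 (h, Dv h)
      = D2 (h, (0 : EuclideanSpace ℝ (Fin n))) + D2 ((0 : EuclideanSpace ℝ (Fin m)), Dv h) := by
    rw [← map_add]
    congr 1
    simp
  have hzero2 : D2 (h, (0 : EuclideanSpace ℝ (Fin n))) (0, u)
      + D2 ((0 : EuclideanSpace ℝ (Fin m)), Dv h) (0, u) = 0 := by
    have hz := congrArg (fun w => ⟪w, u⟫) h3h
    simp only [inner_zero_left] at hz
    rw [split, map_add, inner_add_left, hΦ_apply, hΦ_apply] at hz
    exact hz
  have hsym2 : D2 ((0 : EuclideanSpace ℝ (Fin m)), Dv h) ((0 : EuclideanSpace ℝ (Fin m)), u)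
      = D2 ((0 : EuclideanSpace ℝ (Fin m)), u) ((0 : EuclideanSpace ℝ (Fin m)), Dv h) :=
    hsymm _ _
  have hval : D2 ((0 : EuclideanSpace ℝ (Fin m)), u) ((0 : EuclideanSpace ℝ (Fin m)), Dv h)
      = -β * ⟪gradient C (v θ₀), Dv h⟫ := by
    have hik := hΦ_apply (D2 ((0 : EuclideanSpace ℝ (Fin m)), u)) (Dv h)
    rw [key2] at hik
    rw [← hik, real_inner_smul_left]
  have hLder : fderiv ℝ L θ₀ h = ⟪gradient C (v θ₀), Dv h⟫ := by
    have hLfun : L = fun θ => C (v θ) := funext hL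
    have hcomp : HasFDerivAt L ((fderiv ℝ C (v θ₀)).comp Dv) θ₀ := by
      rw [hLfun]
      exact (hC (v θ₀)).hasFDerivAt.comp θ₀ (hv θ₀).hasFDerivAt
    rw [hcomp.fderiv]
    have hg : ⟪gradient C (v θ₀), Dv h⟫ = fderiv ℝ C (v θ₀) (Dv h) := by
      simp only [gradient]
      rw [InnerProductSpace.toDual_symm_apply]
    rw [hg]
    rfl
  rw [key1, hLder]
  rw [hsym2, hval] at hzero2
  linarith
end

section
/- (Learning via chemical signaling, flow-network form.) Let V = EuclideanSpace ℝ (Fin N), let S be a finite set of ordered pairs (j,k) of nodes in Fin N, let x : Fin N → ℝ, let E_nl : V → ℝ be C², and for conductances θ : S → ℝ define E θ w = E_nl w + (1/2)·Σ_{(j,k)∈S} θ (j,k)·(w j − w k)² + Σ_j x j · w j. Let C : V → ℝ be differentiable, let v : (S → ℝ) → V be differentiable with gradient (E θ) (v θ) = 0 for all θ, fix θ₀ and β ∈ ℝ, and suppose u ∈ V satisfies fderiv ℝ (fun w => gradient (E θ₀) w) (v θ₀) u = −β • gradient C (v θ₀). Define L θ = C (v θ). Then for every edge (j,k) ∈ S,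 (u j − u k)·(v θ₀ j − v θ₀ k) = β · (fderiv ℝ L θ₀ (δ_{(j,k)})), where δ_{(j,k)} : S → ℝ is the indicator of the edge (j,k). -/
open InnerProductSpace

noncomputable section Stmt16Aux

variable {N : ℕ}

/-- edge difference vector -/
def stmt16dp (S : Finset (Fin N × Fin N)) (q : ↥S) : EuclideanSpace ℝ (Fin N) :=
  EuclideanSpace.single (q : Fin N × Fin N).1 1 - EuclideanSpace.single (q : Fin N × Fin N).2 1

lemma stmt16_inner_dp (S : Finset (Fin N × Fin N)) (q : ↥S) (w : EuclideanSpace ℝ (Fin N)) :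
    ⟪stmt16dp S q, w⟫_ℝ = w (q : Fin N × Fin N).1 - w (q : Fin N × Fin N).2 := by
  simp [stmt16dp, inner_sub_left, EuclideanSpace.inner_single_left]

/-- quadratic part of the energy -/
def stmt16Q (S : Finset (Fin N × Fin N)) (c : ↥S → ℝ) (w : EuclideanSpace ℝ (Fin N)) : ℝ :=
  (1 / 2) * ∑ q : ↥S, c q * (w (q : Fin N × Fin N).1 - w (q : Fin N × Fin N).2) ^ 2

/-- bilinear map: gradient of the quadratic part -/
def stmt16B (S : Finset (Fin N × Fin N)) (c : ↥S → ℝ) (w : EuclideanSpace ℝ (Fin N)) :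
    EuclideanSpace ℝ (Fin N) :=
  ∑ q : ↥S, (c q * (w (q : Fin N × Fin N).1 - w (q : Fin N × Fin N).2)) • stmt16dp S q

lemma stmt16_contDiff_Q (S : Finset (Fin N × Fin N)) (c : ↥S → ℝ) {n : WithTop ℕ∞} :
    ContDiff ℝ n (stmt16Q S c) := by
  apply contDiff_const.mul
  apply ContDiff.sum
  intro q _
  exact contDiff_const.mul ((((EuclideanSpace.proj (𝕜 := ℝ) (q : Fin N × Fin N).1).contDiff).sub
    ((EuclideanSpace.proj (𝕜 := ℝ) (q : Fin N × Fin N).2).contDiff)).pow 2)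

lemma stmt16_hasGradientAt_Q (S : Finset (Fin N × Fin N)) (c : ↥S → ℝ)
    (w : EuclideanSpace ℝ (Fin N)) :
    HasGradientAt (stmt16Q S c) (stmt16B S c w) w := by
  classical
  set gq : ↥S → (EuclideanSpace ℝ (Fin N) →L[ℝ] ℝ) := fun q =>
    EuclideanSpace.proj (q : Fin N × Fin N).1 - EuclideanSpace.proj (q : Fin N × Fin N).2 with hgq
  have h1 : ∀ q : ↥S, HasFDerivAt
      (fun w : EuclideanSpace ℝ (Fin N) =>
        c q * (w (q : Fin N × Fin N).1 - w (q : Fin N × Fin N).2) ^ 2)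
      (c q • ((w (q : Fin N × Fin N).1 - w (q : Fin N × Fin N).2) • gq q
        + (w (q : Fin N × Fin N).1 - w (q : Fin N × Fin N).2) • gq q))
      w := by
    intro q
    have h0 : HasFDerivAt
        (fun w : EuclideanSpace ℝ (Fin N) => w (q : Fin N × Fin N).1 - w (q : Fin N × Fin N).2)
        (gq q) w :=
      ((EuclideanSpace.proj (𝕜 := ℝ) (q : Fin N × Fin N).1).hasFDerivAt).sub
        ((EuclideanSpace.proj (𝕜 := ℝ) (q : Fin N × Fin N).2).hasFDerivAt)
    have h2 := (h0.mul h0).const_mul (c q)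
    have : (fun w : EuclideanSpace ℝ (Fin N) =>
        c q * (w (q : Fin N × Fin N).1 - w (q : Fin N × Fin N).2) ^ 2) =
        (fun w : EuclideanSpace ℝ (Fin N) =>
        c q * ((w (q : Fin N × Fin N).1 - w (q : Fin N × Fin N).2) *
          (w (q : Fin N × Fin N).1 - w (q : Fin N × Fin N).2))) := by
      funext w; ring
    rw [this]
    exact h2
  have hsum := HasFDerivAt.fun_sum (fun q (_ : q ∈ Finset.univ) => h1 q)
  have hfin := hsum.const_mul (1 / 2 : ℝ)
  have hgrad := hasFDerivAt_iff_hasGradientAt.mp hfin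
  convert hgrad using 1
  · rfl
  apply (toDual ℝ (EuclideanSpace ℝ (Fin N))).injective
  rw [LinearIsometryEquiv.apply_symm_apply]
  ext z
  simp only [toDual_apply_apply, ContinuousLinearMap.smul_apply, ContinuousLinearMap.coe_sum',
    Finset.sum_apply, ContinuousLinearMap.add_apply, ContinuousLinearMap.coe_sub',
    Pi.sub_apply, PiLp.proj_apply, smul_eq_mul, hgq, stmt16B]
  rw [sum_inner, Finset.mul_sum]
  refine Finset.sum_congr rfl fun q _ => ?_
  rw [real_inner_smul_left, stmt16_inner_dp]
  ring

end Stmt16Aux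


lemma stmt16_hasGradientAt_add {N : ℕ} {f g : EuclideanSpace ℝ (Fin N) → ℝ}
    {f' g' x : EuclideanSpace ℝ (Fin N)} (hf : HasGradientAt f f' x)
    (hg : HasGradientAt g g' x) : HasGradientAt (fun w => f w + g w) (f' + g') x := by
  rw [hasGradientAt_iff_hasFDerivAt] at hf hg ⊢
  simpa only [map_add] using hf.fun_add hg

set_option maxHeartbeats 1600000 in
/-- Learning via chemical signaling, flow-network form: with energy
`E θ w = E_nl w + (1/2)·Σ_{(j,k)∈S} θ_{jk}(w_j − w_k)² + Σ_j x_j w_j`, equilibrium map `v`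
with `∇_w E(θ, ·)|_{v θ} = 0`, and chemical concentration `u` satisfying
`Hess_w E(θ₀, ·)|_{v θ₀} u = −β • ∇C(v θ₀)`, the loss `L θ = C (v θ)` satisfies, for every
edge `(j,k) ∈ S`, `(u_j − u_k)·(v(θ₀)_j − v(θ₀)_k) = β · ∂L/∂θ_{jk}`. -/
theorem stmt16 {N : ℕ}
    (S : Finset (Fin N × Fin N)) (x : Fin N → ℝ)
    (Enl : EuclideanSpace ℝ (Fin N) → ℝ) (hEnl : ContDiff ℝ 2 Enl)
    (E : (↥S → ℝ) → EuclideanSpace ℝ (Fin N) → ℝ)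
    (hEdef : ∀ (θ : ↥S → ℝ) (w : EuclideanSpace ℝ (Fin N)),
      E θ w = Enl w +
        (1 / 2) * ∑ p : ↥S, θ p * (w (p : Fin N × Fin N).1 - w (p : Fin N × Fin N).2) ^ 2 +
        ∑ j, x j * w j)
    (C : EuclideanSpace ℝ (Fin N) → ℝ) (hC : Differentiable ℝ C)
    (v : (↥S → ℝ) → EuclideanSpace ℝ (Fin N)) (hv : Differentiable ℝ v)
    (heq : ∀ θ : ↥S → ℝ, gradient (E θ) (v θ) = 0)
    (θ₀ : ↥S → ℝ) (β : ℝ) (u : EuclideanSpace ℝ (Fin N))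
    (hu : fderiv ℝ (fun w => gradient (E θ₀) w) (v θ₀) u = -β • gradient C (v θ₀))
    (L : (↥S → ℝ) → ℝ) (hL : ∀ θ, L θ = C (v θ)) :
    ∀ (j k : Fin N) (hjk : (j, k) ∈ S),
      (u j - u k) * (v θ₀ j - v θ₀ k) =
        β * fderiv ℝ L θ₀ (Pi.single (⟨(j, k), hjk⟩ : ↥S) 1) := by
  classical
  intro j k hjk
  set q : ↥S := ⟨(j, k), hjk⟩ with hq
  set δ : ↥S → ℝ := Pi.single q 1 with hδ
  -- decomposition of the energy
  have hEsplit : ∀ θ : ↥S → ℝ, E θ = fun w => E θ₀ w + stmt16Q S (θ - θ₀) w := by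
    intro θ; funext w
    simp only [hEdef, stmt16Q, Pi.sub_apply, sub_mul, Finset.sum_sub_distrib]
    ring
  -- smoothness of E θ₀
  have hE2 : ContDiff ℝ 2 (E θ₀) := by
    have hrw : E θ₀ = fun w => Enl w + stmt16Q S θ₀ w + ∑ i, x i * w i := by
      funext w; rw [hEdef]; rfl
    rw [hrw]
    refine (hEnl.add (stmt16_contDiff_Q S θ₀)).add ?_
    exact ContDiff.sum fun i _ => contDiff_const.mul (EuclideanSpace.proj (𝕜 := ℝ) i).contDiff
  have hEdiff : Differentiable ℝ (E θ₀) := hE2.differentiable (by norm_num)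
  -- key pointwise identity for the gradient of E θ₀ along the equilibrium curve
  have hkey : ∀ θ : ↥S → ℝ, gradient (E θ₀) (v θ) = -stmt16B S (θ - θ₀) (v θ) := by
    intro θ
    have h1 : HasGradientAt (E θ₀) (gradient (E θ₀) (v θ)) (v θ) :=
      (hEdiff (v θ)).hasGradientAt
    have h2 := stmt16_hasGradientAt_Q S (θ - θ₀) (v θ)
    have h3 : HasGradientAt (E θ)
        (gradient (E θ₀) (v θ) + stmt16B S (θ - θ₀) (v θ)) (v θ) := by
      rw [hEsplit θ]
      exact stmt16_hasGradientAt_add h1 h2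
    have h4 := h3.gradient
    rw [heq θ] at h4
    exact eq_neg_of_add_eq_zero_left h4.symm
  -- gradient of E θ₀ is C¹
  have hgradC1 : ContDiff ℝ 1 (gradient (E θ₀)) := by
    have h1 : ContDiff ℝ 1 (fderiv ℝ (E θ₀)) := hE2.fderiv_right (by norm_num)
    have hrw : gradient (E θ₀) =
        fun w => (toDual ℝ (EuclideanSpace ℝ (Fin N))).symm (fderiv ℝ (E θ₀) w) := rfl
    rw [hrw]
    exact ((toDual ℝ (EuclideanSpace ℝ (Fin N))).symm.contDiff).comp h1
  set Dv := fderiv ℝ v θ₀ with hDv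
  set Hf := fderiv ℝ (gradient (E θ₀)) (v θ₀) with hHf
  -- chain rule for θ ↦ gradient (E θ₀) (v θ)
  have hΨ1 : HasFDerivAt (fun θ => gradient (E θ₀) (v θ)) (Hf.comp Dv) θ₀ :=
    ((hgradC1.differentiable one_ne_zero (v θ₀)).hasFDerivAt).comp θ₀ (hv θ₀).hasFDerivAt
  -- explicit derivative of θ ↦ -B (θ - θ₀) (v θ)
  have hb : ∀ p : ↥S, DifferentiableAt ℝ
      (fun θ : ↥S → ℝ => v θ (p : Fin N × Fin N).1 - v θ (p : Fin N × Fin N).2) θ₀ := by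
    intro p
    exact (((EuclideanSpace.proj (𝕜 := ℝ) (p : Fin N × Fin N).1).differentiableAt).comp θ₀
      (hv θ₀)).sub (((EuclideanSpace.proj (𝕜 := ℝ) (p : Fin N × Fin N).2).differentiableAt).comp
        θ₀ (hv θ₀))
  set Pr : ↥S → ((↥S → ℝ) →L[ℝ] ℝ) :=
    fun p => ContinuousLinearMap.proj (R := ℝ) (φ := fun _ : ↥S => ℝ) p with hPr
  have ha : ∀ p : ↥S, HasFDerivAt (fun θ : ↥S → ℝ => θ p - θ₀ p) (Pr p) θ₀ :=
    fun p => ((Pr p).hasFDerivAt).sub_const (θ₀ p)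
  have hterm : ∀ p : ↥S, HasFDerivAt
      (fun θ : ↥S → ℝ => ((θ p - θ₀ p) *
        (v θ (p : Fin N × Fin N).1 - v θ (p : Fin N × Fin N).2)) • stmt16dp S p)
      ((((θ₀ p - θ₀ p) • fderiv ℝ
          (fun θ : ↥S → ℝ => v θ (p : Fin N × Fin N).1 - v θ (p : Fin N × Fin N).2) θ₀ +
        (v θ₀ (p : Fin N × Fin N).1 - v θ₀ (p : Fin N × Fin N).2) •
          (Pr p))).smulRight
            (stmt16dp S p)) θ₀ := by
    intro p
    exact (((ha p).mul (hb p).hasFDerivAt)).smul_const (stmt16dp S p)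
  have hsum := HasFDerivAt.fun_sum (fun p (_ : p ∈ Finset.univ) => hterm p)
  have hΨ2 : HasFDerivAt (fun θ => gradient (E θ₀) (v θ))
      (-(∑ p : ↥S, (((θ₀ p - θ₀ p) • fderiv ℝ
          (fun θ : ↥S → ℝ => v θ (p : Fin N × Fin N).1 - v θ (p : Fin N × Fin N).2) θ₀ +
        (v θ₀ (p : Fin N × Fin N).1 - v θ₀ (p : Fin N × Fin N).2) •
          (Pr p))).smulRight
            (stmt16dp S p))) θ₀ := by
    have hrw : (fun θ : ↥S → ℝ => gradient (E θ₀) (v θ)) =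
        fun θ => -(∑ p : ↥S, (((θ p - θ₀ p) *
          (v θ (p : Fin N × Fin N).1 - v θ (p : Fin N × Fin N).2)) • stmt16dp S p)) := by
      funext θ; rw [hkey θ]; rfl
    rw [hrw]
    exact hsum.neg
  have huniq := hΨ1.unique hΨ2
  -- evaluate at the basis direction δ
  have hHD : Hf (Dv δ) = -((v θ₀ j - v θ₀ k) • stmt16dp S q) := by
    have h5 := congrFun (congrArg DFunLike.coe huniq) δ
    simp only [ContinuousLinearMap.comp_apply, ContinuousLinearMap.neg_apply,
      ContinuousLinearMap.sum_apply, ContinuousLinearMap.smulRight_apply,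
      ContinuousLinearMap.add_apply, ContinuousLinearMap.smul_apply,
      ContinuousLinearMap.proj_apply, sub_self, zero_smul, zero_add, smul_eq_mul] at h5
    rw [h5, neg_inj]
    rw [Finset.sum_eq_single q]
    · have h6 : (Pr q) δ = 1 := by simp [hPr, hδ]
      rw [h6, mul_one, hq]
    · intro p _ hp
      have h6 : (Pr p) δ = 0 := by simp [hPr, hδ, Pi.single_apply, hp]
      rw [h6, mul_zero, zero_smul]
    · intro h; exact absurd (Finset.mem_univ q) h
  -- symmetry of the Hessian
  have hsym : ∀ a b : EuclideanSpace ℝ (Fin N), ⟪Hf a, b⟫_ℝ = ⟪Hf b, a⟫_ℝ := by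
    have hsnd : IsSymmSndFDerivAt ℝ (E θ₀) (v θ₀) :=
      hE2.contDiffAt.isSymmSndFDerivAt (by norm_num)
    have hcomp : ∀ a, Hf a = (toDual ℝ (EuclideanSpace ℝ (Fin N))).symm
        (fderiv ℝ (fderiv ℝ (E θ₀)) (v θ₀) a) := by
      intro a
      rw [hHf]
      have hrw : gradient (E θ₀) = (fun φ => (toDual ℝ (EuclideanSpace ℝ (Fin N))).symm φ) ∘
        (fderiv ℝ (E θ₀)) := rfl
      rw [hrw, LinearIsometryEquiv.comp_fderiv]
      rfl
    intro a b
    rw [hcomp a, hcomp b, InnerProductSpace.toDual_symm_apply,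
      InnerProductSpace.toDual_symm_apply]
    exact hsnd a b
  -- derivative of the loss
  have hLd : fderiv ℝ L θ₀ δ = fderiv ℝ C (v θ₀) (Dv δ) := by
    have hLC : L = C ∘ v := funext hL
    rw [hLC, fderiv_comp θ₀ (hC (v θ₀)) (hv θ₀)]
    rfl
  have hCinner : fderiv ℝ C (v θ₀) (Dv δ) = ⟪gradient C (v θ₀), Dv δ⟫_ℝ :=
    (InnerProductSpace.toDual_symm_apply).symm
  -- put everything together
  have e1 : ⟪Hf u, (Dv δ)⟫_ℝ = -β * ⟪gradient C (v θ₀), Dv δ⟫_ℝ := by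
    rw [show Hf u = -β • gradient C (v θ₀) from hu, real_inner_smul_left]
  have e2 : ⟪Hf u, (Dv δ)⟫_ℝ = ⟪Hf (Dv δ), u⟫_ℝ := hsym u (Dv δ)
  have e3 : ⟪Hf (Dv δ), u⟫_ℝ = -((v θ₀ j - v θ₀ k) * (u j - u k)) := by
    rw [hHD, inner_neg_left, real_inner_smul_left, stmt16_inner_dp]
  have e4 : β * fderiv ℝ L θ₀ δ = β * ⟪gradient C (v θ₀), Dv δ⟫_ℝ := by
    rw [hLd, hCinner]
  rw [hδ, hq] at e4 ⊢
  nlinarith [e1, e2, e3, e4]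
end
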